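/- arXiv:1907.01454 — 10 statements merged into one kernel-verified Lean document; each statement's English description precedes it below -/
import Mathlib

section
/- Let i : A → X be a continuous map of topological spaces. Assume that i has the left lifting property with respect to every continuous map that is both an h-fibration and a homotopy equivalence; that is, for every such p : E → B and all continuous maps u : A → E and v : X → B with p ∘ u = v ∘ i, there exists a continuous map ℓ : X → E with ℓ ∘ i = u and p ∘ ℓ = v. Then i is relative-T1 (in particular, i is injective). -/
open unitInterval

/-- A map `i : A → X` is *relative-`T₁`* if it is injective and for every open subset
`U` of `A` and every point `z` of `X` not belonging to `i '' U`, there is an open subset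
`W` of `X` with `i '' U ⊆ W` and `z ∉ W`. -/
def RelativeT1 {A X : Type*} [TopologicalSpace A] [TopologicalSpace X] (i : A → X) : Prop :=
  Function.Injective i ∧
    ∀ U : Set A, IsOpen U → ∀ z : X, z ∉ i '' U →
      ∃ W : Set X, IsOpen W ∧ i '' U ⊆ W ∧ z ∉ W

/-- A continuous map `p : E → B` is an *h-fibration* if it has the homotopy lifting
property with respect to every topological space `Z`, i.e. the right lifting property
with respect to the inclusions `Z × {0} ↪ Z × [0,1]`. -/
def IsHFibration {E B : Type} [TopologicalSpace E] [TopologicalSpace B] (p : E → B) : Prop :=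
  Continuous p ∧
    ∀ (Z : Type) (_ : TopologicalSpace Z) (u : Z → E) (H : Z × I → B),
      Continuous u → Continuous H → (∀ z : Z, H (z, 0) = p (u z)) →
        ∃ G : Z × I → E, Continuous G ∧ p ∘ G = H ∧ ∀ z : Z, G (z, 0) = u z

/-- A continuous map is a *homotopy equivalence* if it admits a continuous inverse up to
homotopy. -/
def IsHomotopyEquivMap {E B : Type} [TopologicalSpace E] [TopologicalSpace B]
    (p : C(E, B)) : Prop :=
  ∃ g : C(B, E), (p.comp g).Homotopic (ContinuousMap.id B) ∧
    (g.comp p).Homotopic (ContinuousMap.id E)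

/-!  ### Auxiliary constructions

`LowE X z` is the set `X × [0,1]` with the point `(z, 0)` removed, where the interval
carries the *lower* topology (opens `[0,a)`).  Its projection to `X` is a trivial
h-fibration, and a lift against it produces the separating open set for relative-T₁.

`IndE X A` is the product of `X` with an indiscrete copy of `A`; its projection to `X`
is a trivial h-fibration, and a lift against it produces a retraction of `i`, giving
injectivity. -/

@[ext]
structure LowE (X : Type) (z : X) : Type where
  pt : X
  ht : ℝ
  ht0 : 0 ≤ ht
  ht1 : ht ≤ 1
  pos : pt = z → 0 < ht

namespace LowE

variable {X : Type} [TopologicalSpace X] {z : X}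

/-- Generating opens: cylinders over opens of `X`, and lower intervals in the fiber. -/
def gens (X : Type) [TopologicalSpace X] (z : X) : Set (Set (LowE X z)) :=
  {S | (∃ V : Set X, IsOpen V ∧ S = {w : LowE X z | w.pt ∈ V}) ∨
    ∃ a : ℝ, S = {w : LowE X z | w.ht < a}}

instance : TopologicalSpace (LowE X z) := TopologicalSpace.generateFrom (gens X z)

lemma isOpen_pt_mem {V : Set X} (hV : IsOpen V) : IsOpen {w : LowE X z | w.pt ∈ V} :=
  TopologicalSpace.isOpen_generateFrom_of_mem (Or.inl ⟨V, hV, rfl⟩)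

lemma isOpen_ht_lt (a : ℝ) : IsOpen {w : LowE X z | w.ht < a} :=
  TopologicalSpace.isOpen_generateFrom_of_mem (Or.inr ⟨a, rfl⟩)

lemma continuous_pt : Continuous (pt : LowE X z → X) :=
  continuous_def.mpr fun _ hV => isOpen_pt_mem hV

lemma continuous_into {Y : Type*} [TopologicalSpace Y] {f : Y → LowE X z}
    (h1 : Continuous fun y => (f y).pt) (h2 : ∀ a : ℝ, IsOpen {y | (f y).ht < a}) :
    Continuous f := by
  refine continuous_generateFrom_iff.mpr ?_
  rintro S (⟨V, hV, rfl⟩ | ⟨a, rfl⟩)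
  · exact hV.preimage h1
  · exact h2 a

lemma hfib : IsHFibration (pt : LowE X z → X) := by
  refine ⟨continuous_pt, ?_⟩
  intro Z tZ
  letI := tZ
  intro u H hu hH h0
  refine ⟨fun q => ⟨H q, max (u q.1).ht (q.2 : ℝ),
      le_max_of_le_right q.2.2.1, max_le (u q.1).ht1 q.2.2.2, ?_⟩, ?_, rfl, ?_⟩
  · intro hz
    rcases lt_or_ge 0 ((q.2 : I) : ℝ) with h2 | h2
    · exact lt_max_of_lt_right h2
    · have hq2 : q.2 = (0 : I) := Subtype.ext (le_antisymm h2 q.2.2.1)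
      have hz' : H (q.1, (0 : I)) = z := by
        rw [show (q.1, (0 : I)) = q from (Prod.ext rfl hq2.symm)]
        exact hz
      exact lt_max_of_lt_left ((u q.1).pos ((h0 q.1).symm.trans hz'))
  · refine continuous_into (by exact hH) ?_
    intro a
    have hset : {q : Z × I | max (u q.1).ht (q.2 : ℝ) < a} =
        ((fun q : Z × I => u q.1) ⁻¹' {w : LowE X z | w.ht < a}) ∩
          ((fun q : Z × I => (q.2 : ℝ)) ⁻¹' Set.Iio a) := by
      ext q
      simp [max_lt_iff]
    rw [show {q : Z × I | max (u q.1).ht (q.2 : ℝ) < a} = _ from hset]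
    exact ((isOpen_ht_lt a).preimage (hu.comp continuous_fst)).inter
      (isOpen_Iio.preimage (continuous_subtype_val.comp continuous_snd))
  · intro w
    ext
    · exact h0 w
    · show max (u w).ht ((0 : I) : ℝ) = (u w).ht
      rw [show ((0 : I) : ℝ) = 0 from rfl]
      exact max_eq_left (u w).ht0

/-- The section at height 1. -/
def gmap (X : Type) [TopologicalSpace X] (z : X) : C(X, LowE X z) where
  toFun x := ⟨x, 1, zero_le_one, le_rfl, fun _ => one_pos⟩
  continuous_toFun := by
    refine continuous_into continuous_id ?_
    intro a
    by_cases h : (1 : ℝ) < a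
    · rw [show {y : X | (1 : ℝ) < a} = Set.univ from by ext y; simp [h]]
      exact isOpen_univ
    · rw [show {y : X | (1 : ℝ) < a} = (∅ : Set X) from by ext y; simp [h]]
      exact isOpen_empty

lemma htpyEquiv : IsHomotopyEquivMap (⟨pt, continuous_pt⟩ : C(LowE X z, X)) := by
  refine ⟨gmap X z, ?_, ?_⟩
  · rw [show (⟨pt, continuous_pt⟩ : C(LowE X z, X)).comp (gmap X z) = ContinuousMap.id X from
      ContinuousMap.ext fun x => rfl]
  · refine ⟨⟨⟨fun q => ⟨q.2.pt, max q.2.ht (1 - (q.1 : ℝ)),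
      le_max_of_le_left q.2.ht0, max_le q.2.ht1 (sub_le_self 1 q.1.2.1),
      fun h => lt_max_of_lt_left (q.2.pos h)⟩, ?_⟩, ?_, ?_⟩⟩
    · refine continuous_into (show Continuous fun q : I × LowE X z => q.2.pt from continuous_pt.comp continuous_snd) ?_
      intro a
      have hset : {q : I × LowE X z | max q.2.ht (1 - (q.1 : ℝ)) < a} =
          ((fun q : I × LowE X z => q.2) ⁻¹' {w : LowE X z | w.ht < a}) ∩
            ((fun q : I × LowE X z => 1 - (q.1 : ℝ)) ⁻¹' Set.Iio a) := by
        ext q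
        simp [max_lt_iff]
      rw [show {q : I × LowE X z | max q.2.ht (1 - (q.1 : ℝ)) < a} = _ from hset]
      exact ((isOpen_ht_lt a).preimage continuous_snd).inter
        (isOpen_Iio.preimage ((continuous_const.sub continuous_subtype_val).comp continuous_fst))
    · intro w
      ext
      · rfl
      · show max w.ht (1 - ((0 : I) : ℝ)) = 1
        rw [show ((0 : I) : ℝ) = 0 from rfl]
        rw [sub_zero]
        exact max_eq_right w.ht1
    · intro w
      ext
      · rfl
      · show max w.ht (1 - ((1 : I) : ℝ)) = w.ht
        rw [show ((1 : I) : ℝ) = 1 from rfl]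
        rw [sub_self]
        exact max_eq_left w.ht0

end LowE

@[ext]
structure IndE (X A : Type) : Type where
  x : X
  a : A

namespace IndE

variable {X A : Type} [TopologicalSpace X]

instance : TopologicalSpace (IndE X A) :=
  TopologicalSpace.generateFrom {S | ∃ V : Set X, IsOpen V ∧ S = {w : IndE X A | w.x ∈ V}}

lemma isOpen_x_mem {V : Set X} (hV : IsOpen V) : IsOpen {w : IndE X A | w.x ∈ V} :=
  TopologicalSpace.isOpen_generateFrom_of_mem ⟨V, hV, rfl⟩

lemma continuous_x : Continuous (x : IndE X A → X) :=
  continuous_def.mpr fun _ hV => isOpen_x_mem hV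

lemma continuous_into {Y : Type*} [TopologicalSpace Y] {f : Y → IndE X A}
    (h1 : Continuous fun y => (f y).x) : Continuous f := by
  refine continuous_generateFrom_iff.mpr ?_
  rintro S ⟨V, hV, rfl⟩
  exact hV.preimage h1

lemma hfib : IsHFibration (x : IndE X A → X) := by
  refine ⟨continuous_x, ?_⟩
  intro Z tZ
  letI := tZ
  intro u H hu hH h0
  refine ⟨fun q => ⟨H q, (u q.1).a⟩, continuous_into (by exact hH), rfl, ?_⟩
  intro w
  ext
  · exact h0 w
  · rfl

/-- The section determined by a point `a₀ : A`. -/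
def gmap (X A : Type) [TopologicalSpace X] (a₀ : A) : C(X, IndE X A) where
  toFun x := ⟨x, a₀⟩
  continuous_toFun := continuous_into continuous_id

lemma htpyEquiv (a₀ : A) : IsHomotopyEquivMap (⟨x, continuous_x⟩ : C(IndE X A, X)) := by
  classical
  refine ⟨gmap X A a₀, ?_, ?_⟩
  · rw [show (⟨x, continuous_x⟩ : C(IndE X A, X)).comp (gmap X A a₀) = ContinuousMap.id X from
      ContinuousMap.ext fun x => rfl]
  · refine ⟨⟨⟨fun q => if q.1 = (1 : I) then q.2 else ⟨q.2.x, a₀⟩, ?_⟩, ?_, ?_⟩⟩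
    · refine continuous_into ?_
      have hfun : (fun q : I × IndE X A =>
          (if q.1 = (1 : I) then q.2 else ⟨q.2.x, a₀⟩ : IndE X A).x) = fun q => q.2.x := by
        funext q
        split <;> rfl
      rw [hfun]
      exact continuous_x.comp continuous_snd
    · intro w
      show (if (0 : I) = (1 : I) then w else ⟨w.x, a₀⟩) = (gmap X A a₀) w.x
      rw [if_neg (fun h => (by norm_num : ((0 : I) : ℝ) ≠ 1) (congrArg Subtype.val h))]
      rfl
    · intro w
      show (if (1 : I) = (1 : I) then w else ⟨w.x, a₀⟩) = w
      rw [if_pos rfl]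

end IndE

/-- A continuous map having the left lifting property with respect to all maps that are
both h-fibrations and homotopy equivalences is relative-`T₁`. -/
theorem relativeT1_of_llp_trivial_hFibrations
    {A X : Type} [TopologicalSpace A] [TopologicalSpace X]
    (i : A → X) (hi : Continuous i)
    (hllp : ∀ (E B : Type) (_ : TopologicalSpace E) (_ : TopologicalSpace B)
      (p : E → B) (hp : Continuous p), IsHFibration p → IsHomotopyEquivMap ⟨p, hp⟩ →
      ∀ (u : A → E) (v : X → B), Continuous u → Continuous v → p ∘ u = v ∘ i →
        ∃ ℓ : X → E, Continuous ℓ ∧ ℓ ∘ i = u ∧ p ∘ ℓ = v) :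
    RelativeT1 i := by
  classical
  constructor
  · -- injectivity, via the indiscrete-fiber trivial h-fibration
    rcases isEmpty_or_nonempty A with hA | hA
    · intro a b _
      exact hA.elim a
    · obtain ⟨a₀⟩ := hA
      obtain ⟨ℓ, hℓc, hℓi, hℓp⟩ :=
        hllp (IndE X A) X inferInstance inferInstance IndE.x IndE.continuous_x
          IndE.hfib (IndE.htpyEquiv a₀)
          (fun a => ⟨i a, a⟩) id (IndE.continuous_into (by exact hi)) continuous_id rfl
      intro a b hab
      have ha : (ℓ (i a)).a = a := congrArg IndE.a (congrFun hℓi a)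
      have hb : (ℓ (i b)).a = b := congrArg IndE.a (congrFun hℓi b)
      rw [← ha, ← hb, hab]
  · -- separation, via the lower-interval trivial h-fibration
    intro U hU z hz
    have hucont : Continuous (fun a : A =>
        (⟨i a, if a ∈ U then 0 else 1, by split <;> norm_num, by split <;> norm_num,
          fun h => by
            by_cases ha : a ∈ U
            · exact absurd ⟨a, ha, h⟩ hz
            · rw [if_neg ha]; exact one_pos⟩ : LowE X z)) := by
      refine LowE.continuous_into (by exact hi) ?_
      intro c
      by_cases h1 : (1 : ℝ) < c
      · rw [show {a : A | (if a ∈ U then (0:ℝ) else 1) < c} = Set.univ from by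
          ext a
          by_cases ha : a ∈ U
          · simp [ha]; linarith
          · simp [ha, h1]]
        exact isOpen_univ
      · by_cases h0 : (0 : ℝ) < c
        · rw [show {a : A | (if a ∈ U then (0:ℝ) else 1) < c} = U from by
            ext a
            by_cases ha : a ∈ U
            · simp [ha, h0]
            · simp [ha, h1]]
          exact hU
        · rw [show {a : A | (if a ∈ U then (0:ℝ) else 1) < c} = ∅ from by
            ext a
            by_cases ha : a ∈ U
            · simp [ha, h0]
            · simp [ha]; linarith]
          exact isOpen_empty
    obtain ⟨ℓ, hℓc, hℓi, hℓp⟩ :=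
      hllp (LowE X z) X inferInstance inferInstance LowE.pt LowE.continuous_pt
        LowE.hfib LowE.htpyEquiv _ id hucont continuous_id rfl
    have hzpt : (ℓ z).pt = z := congrFun hℓp z
    have hzpos : 0 < (ℓ z).ht := (ℓ z).pos hzpt
    refine ⟨{x : X | (ℓ x).ht < (ℓ z).ht}, ?_, ?_, ?_⟩
    · exact (LowE.isOpen_ht_lt ((ℓ z).ht)).preimage hℓc
    · rintro _ ⟨a, ha, rfl⟩
      have h3 : (ℓ (i a)).ht = (if a ∈ U then (0:ℝ) else 1) :=
        congrArg LowE.ht (congrFun hℓi a)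
      show (ℓ (i a)).ht < (ℓ z).ht
      rw [h3, if_pos ha]
      exact hzpos
    · exact fun h => lt_irrefl ((ℓ z).ht) h
end

section
/- Let X be a Δ-generated topological space. Then X is Δ-Hausdorff if and only if the diagonal {(x,x) : x ∈ X} is a closed subset of the Δ-kelleyfication of the product space X × X. -/
open Topology

/-- A topological space `X` is *Δ-Hausdorff* if the image of every continuous map
`[0,1] → X` is closed in `X`. -/
def DeltaHausdorff (X : Type*) [TopologicalSpace X] : Prop :=
  ∀ f : C(unitInterval, X), IsClosed (Set.range f)

open TopologicalSpace Set Filter in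
/-- Closedness in the delta-generated topology is tested by preimages under maps from ℝⁿ. -/
lemma isClosed_deltaGenerated_iff' {Z : Type*} [TopologicalSpace Z] {C : Set Z} :
    IsClosed[deltaGenerated Z] C ↔ ∀ n (p : C(Fin n → ℝ, Z)), IsClosed (p ⁻¹' C) := by
  rw [← @isOpen_compl_iff Z C (deltaGenerated Z)]
  simp only [deltaGenerated, isOpen_iSup_iff, isOpen_coinduced, Sigma.forall]
  exact forall_congr' fun n => forall_congr' fun p => by
    rw [Set.preimage_compl, isOpen_compl_iff]

open TopologicalSpace Set Filter in
lemma deltaGeneratedSpace_isClosed_iff' {Z : Type*} [TopologicalSpace Z]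
    [DeltaGeneratedSpace Z] {C : Set Z} :
    IsClosed C ↔ ∀ n (p : C(Fin n → ℝ, Z)), IsClosed (p ⁻¹' C) := by
  rw [← isOpen_compl_iff, IsGeneratedBy.isOpen_iff (fun n ↦ Fin n → ℝ)]
  exact forall_congr' fun n => forall_congr' fun p => by
    rw [Set.preimage_compl, isOpen_compl_iff]

open TopologicalSpace Set Filter in
/-- If two paths in a Δ-Hausdorff space agree on a monotone sequence tending to 1,
they agree at 1. -/
lemma deltaHausdorff_eq_at_one {X : Type*} [TopologicalSpace X] (hX : DeltaHausdorff X)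
    (α β : C(unitInterval, X)) (u : ℕ → unitInterval)
    (hmono : Monotone u) (hlt : ∀ k, (u k : ℝ) < 1)
    (hlim : Filter.Tendsto (fun k => (u k : ℝ)) Filter.atTop (nhds 1))
    (heq : ∀ k, α (u k) = β (u k)) : α 1 = β 1 := by
  have hρmem : ∀ (k : ℕ) (s : unitInterval),
      (u k : ℝ) + s.val * (1 - (u k : ℝ)) ∈ unitInterval := by
    intro k s
    constructor
    · exact add_nonneg (u k).2.1 (mul_nonneg s.2.1 (sub_nonneg.2 (u k).2.2))
    · nlinarith [s.2.1, s.2.2, (u k).2.1, (u k).2.2]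
  let ρ : ℕ → C(unitInterval, unitInterval) := fun k =>
    ⟨fun s => ⟨(u k : ℝ) + s.val * (1 - (u k : ℝ)), hρmem k s⟩, by
      exact Continuous.subtype_mk
        (continuous_const.add (continuous_subtype_val.mul continuous_const)) _⟩
  have hulim : Filter.Tendsto u Filter.atTop (nhds (1 : unitInterval)) := by
    rw [tendsto_subtype_rng]; exact hlim
  have hα1 : Filter.Tendsto (fun m => α (u m)) Filter.atTop (nhds (α 1)) :=
    (α.continuous.tendsto 1).comp hulim
  have hmem : ∀ k, α 1 ∈ Set.range (β.comp (ρ k)) := by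
    intro k
    refine (hX (β.comp (ρ k))).mem_of_tendsto hα1 ?_
    filter_upwards [Filter.eventually_ge_atTop k] with m hm
    have h1k : (0:ℝ) < 1 - (u k : ℝ) := by linarith [hlt k]
    have hkm : (u k : ℝ) ≤ (u m : ℝ) := hmono hm
    have hs0a : (0:ℝ) ≤ ((u m : ℝ) - (u k : ℝ)) / (1 - (u k : ℝ)) :=
      div_nonneg (by linarith) h1k.le
    have hs0b : ((u m : ℝ) - (u k : ℝ)) / (1 - (u k : ℝ)) ≤ 1 :=
      (div_le_one h1k).2 (by linarith [(u m).2.2])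
    refine ⟨⟨((u m : ℝ) - (u k : ℝ)) / (1 - (u k : ℝ)), hs0a, hs0b⟩, ?_⟩
    have hval : (ρ k) ⟨((u m : ℝ) - (u k : ℝ)) / (1 - (u k : ℝ)), hs0a, hs0b⟩ = u m := by
      apply Subtype.ext
      show (u k : ℝ) + _ * _ = (u m : ℝ)
      rw [div_mul_cancel₀ _ h1k.ne']
      ring
    rw [ContinuousMap.comp_apply, hval, heq m]
  choose w hw using hmem
  set v : ℕ → unitInterval := fun k => (ρ k) (w k) with hv
  have hvlim : Filter.Tendsto v Filter.atTop (nhds (1 : unitInterval)) := by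
    rw [tendsto_subtype_rng]
    refine tendsto_of_tendsto_of_tendsto_of_le_of_le hlim tendsto_const_nhds ?_ ?_
    · intro k
      show (u k : ℝ) ≤ (u k : ℝ) + (w k).val * (1 - (u k : ℝ))
      have := mul_nonneg (w k).2.1 (sub_nonneg.2 (u k).2.2)
      linarith
    · intro k; exact (v k).2.2
  have hβv : Filter.Tendsto (fun k => β (v k)) Filter.atTop (nhds (β 1)) :=
    (β.continuous.tendsto 1).comp hvlim
  have hconst : ∀ k, β (v k) = α 1 := fun k => hw k
  rw [show (fun k => β (v k)) = fun _ => α 1 from funext hconst] at hβv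
  have hsingle : IsClosed ({α 1} : Set X) := by
    have := hX (ContinuousMap.const unitInterval (α 1))
    rwa [show Set.range (ContinuousMap.const unitInterval (α 1)) = {α 1} from
      Set.range_const] at this
  have : β 1 ∈ closure ({α 1} : Set X) :=
    mem_closure_of_tendsto hβv (Filter.Eventually.of_forall fun k => rfl)
  rw [hsingle.closure_eq, Set.mem_singleton_iff] at this
  exact this.symm

/-- The sequence `1 - 2⁻ᵏ` in the unit interval. -/
noncomputable def aSeq (k : ℕ) : unitInterval :=
  ⟨1 - (2:ℝ)⁻¹ ^ k, by
    constructor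
    · have : (2:ℝ)⁻¹ ^ k ≤ 1 := pow_le_one₀ (by norm_num) (by norm_num)
      linarith
    · have : (0:ℝ) ≤ (2:ℝ)⁻¹ ^ k := by positivity
      linarith⟩

lemma aSeq_sep {j k : ℕ} (h : j ≠ k) :
    (2:ℝ)⁻¹ ^ (j + 2) ≤ |((aSeq k : ℝ)) - (aSeq j : ℝ)| := by
  have hA : (0:ℝ) < (2:ℝ)⁻¹ ^ j := by positivity
  have e1 : ((aSeq k : ℝ)) - (aSeq j : ℝ) = (2:ℝ)⁻¹ ^ j - (2:ℝ)⁻¹ ^ k := by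
    simp [aSeq]
  rw [e1]
  have hs : ∀ m : ℕ, (2:ℝ)⁻¹ ^ (m+1) = (2:ℝ)⁻¹ ^ m * 2⁻¹ := fun m => pow_succ _ _
  rcases lt_or_gt_of_ne h with hjk | hjk
  · have hk : (2:ℝ)⁻¹ ^ k ≤ (2:ℝ)⁻¹ ^ (j+1) :=
      pow_le_pow_of_le_one (by norm_num) (by norm_num) hjk
    rw [hs j] at hk
    rw [abs_of_nonneg (by linarith)]
    have h2 : (2:ℝ)⁻¹ ^ (j+2) = (2:ℝ)⁻¹ ^ j * 2⁻¹ * 2⁻¹ := by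
      rw [hs (j+1), hs j]
    rw [h2]; linarith
  · have hj : (2:ℝ)⁻¹ ^ j ≤ (2:ℝ)⁻¹ ^ (k+1) :=
      pow_le_pow_of_le_one (by norm_num) (by norm_num) hjk
    rw [hs k] at hj
    have hB : (0:ℝ) < (2:ℝ)⁻¹ ^ k := by positivity
    rw [abs_of_nonpos (by linarith)]
    have : (2:ℝ)⁻¹ ^ (j+2) ≤ (2:ℝ)⁻¹ ^ j := by
      apply pow_le_pow_of_le_one (by norm_num) (by norm_num); omega
    linarith

lemma aSeq_one_sep (j : ℕ) : (2:ℝ)⁻¹ ^ (j + 2) ≤ |(1:ℝ) - (aSeq j : ℝ)| := by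
  have e1 : (1:ℝ) - (aSeq j : ℝ) = (2:ℝ)⁻¹ ^ j := by simp [aSeq]
  rw [e1, abs_of_nonneg (by positivity)]
  apply pow_le_pow_of_le_one (by norm_num) (by norm_num); omega

lemma aSeq_mono : Monotone aSeq := by
  intro i j hij
  rw [← Subtype.coe_le_coe]
  have : (2:ℝ)⁻¹ ^ j ≤ (2:ℝ)⁻¹ ^ i :=
    pow_le_pow_of_le_one (by norm_num) (by norm_num) hij
  show (1:ℝ) - (2:ℝ)⁻¹ ^ i ≤ 1 - (2:ℝ)⁻¹ ^ j
  linarith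

lemma aSeq_lt_one (k : ℕ) : (aSeq k : ℝ) < 1 := by
  have : (0:ℝ) < (2:ℝ)⁻¹ ^ k := by positivity
  show (1:ℝ) - (2:ℝ)⁻¹ ^ k < 1
  linarith

lemma aSeq_tendsto : Filter.Tendsto (fun k => ((aSeq k : ℝ))) Filter.atTop (nhds 1) := by
  have h : Filter.Tendsto (fun k : ℕ => (2:ℝ)⁻¹ ^ k) Filter.atTop (nhds 0) :=
    tendsto_pow_atTop_nhds_zero_of_lt_one (by norm_num) (by norm_num)
  have : (fun k => ((aSeq k : ℝ))) = fun k => 1 - (2:ℝ)⁻¹ ^ k := rfl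
  rw [this]
  simpa using tendsto_const_nhds.sub h

open Set Filter in
/-- A continuous path through a rapidly converging sequence. -/
lemma exists_zigzag {n : ℕ} (z : ℕ → (Fin n → ℝ)) (y : Fin n → ℝ)
    (hz : ∀ k, dist (z k) y ≤ (2:ℝ)⁻¹ ^ k) :
    ∃ c : C(unitInterval, Fin n → ℝ), c 1 = y ∧ ∀ k, c (aSeq k) = z k := by
  set φ : ℕ → ℝ → ℝ := fun j x => max 0 (1 - |x - (aSeq j : ℝ)| / (2:ℝ)⁻¹ ^ (j+2)) with hφ
  have hr : ∀ j : ℕ, (0:ℝ) < (2:ℝ)⁻¹ ^ (j+2) := fun j => by positivity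
  have hφcont : ∀ j, Continuous (φ j) := by
    intro j
    exact continuous_const.max
      (continuous_const.sub (((continuous_id.sub continuous_const).abs).div_const _))
  have hφ0 : ∀ j x, (2:ℝ)⁻¹ ^ (j+2) ≤ |x - (aSeq j : ℝ)| → φ j x = 0 := by
    intro j x hx
    apply max_eq_left
    have : (1:ℝ) ≤ |x - (aSeq j : ℝ)| / (2:ℝ)⁻¹ ^ (j+2) := (one_le_div (hr j)).2 hx
    linarith
  have hφone : ∀ j, φ j (aSeq j : ℝ) = 1 := by
    intro j
    simp [hφ, abs_of_nonneg]
  have hφmem : ∀ j x, 0 ≤ φ j x ∧ φ j x ≤ 1 := by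
    intro j x
    refine ⟨le_max_left _ _, max_le (by norm_num) ?_⟩
    have : (0:ℝ) ≤ |x - (aSeq j : ℝ)| / (2:ℝ)⁻¹ ^ (j+2) :=
      div_nonneg (abs_nonneg _) (hr j).le
    linarith
  have hcont : Continuous (fun t : unitInterval => y + ∑' j, φ j t.val • (z j - y)) := by
    refine continuous_const.add (continuous_tsum (fun j => ?_) (summable_geometric_of_lt_one
      (by norm_num : (0:ℝ) ≤ 2⁻¹) (by norm_num)) (fun j t => ?_))
    · exact ((hφcont j).comp continuous_subtype_val).smul continuous_const
    · rw [norm_smul]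
      have h1 : ‖φ j t.val‖ ≤ 1 := by
        rw [Real.norm_eq_abs, abs_of_nonneg (hφmem j t.val).1]; exact (hφmem j t.val).2
      have h2 : ‖z j - y‖ ≤ (2:ℝ)⁻¹ ^ j := by rw [← dist_eq_norm]; exact hz j
      calc ‖φ j t.val‖ * ‖z j - y‖ ≤ 1 * ((2:ℝ)⁻¹ ^ j) :=
            mul_le_mul h1 h2 (norm_nonneg _) zero_le_one
        _ = (2:ℝ)⁻¹ ^ j := one_mul _
  refine ⟨⟨fun t => y + ∑' j, φ j t.val • (z j - y), hcont⟩, ?_, ?_⟩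
  · show y + ∑' j, φ j (((1:unitInterval) : ℝ)) • (z j - y) = y
    have h1 : ((1:unitInterval) : ℝ) = 1 := rfl
    have : (fun j => φ j (((1:unitInterval) : ℝ)) • (z j - y)) = fun _ => (0 : Fin n → ℝ) := by
      funext j
      rw [h1, hφ0 j 1 (aSeq_one_sep j), zero_smul]
    rw [this, tsum_zero, add_zero]
  · intro k
    show y + ∑' j, φ j ((aSeq k : ℝ)) • (z j - y) = z k
    rw [tsum_eq_single k (fun j hj => by
      rw [hφ0 j _ (aSeq_sep hj), zero_smul])]
    rw [hφone k, one_smul]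
    abel

open TopologicalSpace Set Filter in
/-- A Δ-generated space is Δ-Hausdorff iff its diagonal is closed in the
Δ-kelleyfication of the product `X × X`. -/
theorem deltaHausdorff_iff_isClosed_diagonal
    (X : Type*) [TopologicalSpace X] [DeltaGeneratedSpace X] :
    DeltaHausdorff X ↔
      IsClosed[TopologicalSpace.deltaGenerated (X × X)] {p : X × X | p.1 = p.2} := by
  rw [isClosed_deltaGenerated_iff']
  constructor
  · -- Δ-Hausdorff ⟹ diagonal Δ-closed
    intro hX n P
    refine isClosed_of_closure_subset ?_
    intro y₀ hy₀
    have hch : ∀ k : ℕ, ∃ e, e ∈ P ⁻¹' {p : X × X | p.1 = p.2} ∧ dist y₀ e < (2:ℝ)⁻¹ ^ k :=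
      fun k => Metric.mem_closure_iff.1 hy₀ _ (by positivity)
    choose e he hd using hch
    have hz : ∀ k, dist (e k) y₀ ≤ (2:ℝ)⁻¹ ^ k := fun k => by
      rw [dist_comm]; exact (hd k).le
    obtain ⟨c, hc1, hck⟩ := exists_zigzag e y₀ hz
    let α : C(unitInterval, X) := ⟨fun t => (P (c t)).1,
      (continuous_fst.comp P.continuous).comp c.continuous⟩
    let β : C(unitInterval, X) := ⟨fun t => (P (c t)).2,
      (continuous_snd.comp P.continuous).comp c.continuous⟩
    have key : α 1 = β 1 := by
      refine deltaHausdorff_eq_at_one hX α β aSeq aSeq_mono aSeq_lt_one aSeq_tendsto ?_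
      intro k
      show (P (c (aSeq k))).1 = (P (c (aSeq k))).2
      rw [hck k]
      exact he k
    have : (P (c 1)).1 = (P (c 1)).2 := key
    rw [hc1] at this
    exact this
  · -- diagonal Δ-closed ⟹ Δ-Hausdorff
    intro h f
    rw [deltaGeneratedSpace_isClosed_iff']
    intro n g
    have hΦc : Continuous (fun y : Fin (n+1) → ℝ =>
        ((f (Set.projIcc (0:ℝ) 1 zero_le_one (y 0)), g (Fin.tail y)) : X × X)) := by
      refine Continuous.prodMk ?_ ?_
      · exact f.continuous.comp (continuous_projIcc.comp (continuous_apply 0))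
      · exact g.continuous.comp (continuous_pi fun i => continuous_apply i.succ)
    have hF := h (n+1) ⟨_, hΦc⟩
    have hs : Continuous (fun q : unitInterval × (Fin n → ℝ) =>
        (Fin.cons (q.1 : ℝ) q.2 : Fin (n+1) → ℝ)) := by
      refine continuous_pi fun i => ?_
      refine Fin.cases ?_ (fun j => ?_) i
      · simp only [Fin.cons_zero]; fun_prop
      · simp only [Fin.cons_succ]; fun_prop
    have hD : IsClosed {q : unitInterval × (Fin n → ℝ) | f q.1 = g q.2} := by
      have hset : {q : unitInterval × (Fin n → ℝ) | f q.1 = g q.2} =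
          (fun q : unitInterval × (Fin n → ℝ) => (Fin.cons (q.1 : ℝ) q.2 : Fin (n+1) → ℝ)) ⁻¹'
            ((fun y : Fin (n+1) → ℝ =>
              ((f (Set.projIcc (0:ℝ) 1 zero_le_one (y 0)), g (Fin.tail y)) : X × X)) ⁻¹'
                {p : X × X | p.1 = p.2}) := by
        ext ⟨t, w⟩
        simp [Fin.cons_zero, Fin.tail_cons, Set.projIcc_val]
      rw [hset]
      exact (hF.preimage hs : _)
    have himg : g ⁻¹' (Set.range f) =
        Prod.snd '' {q : unitInterval × (Fin n → ℝ) | f q.1 = g q.2} := by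
      ext w
      constructor
      · rintro ⟨t, ht⟩
        exact ⟨(t, w), ht, rfl⟩
      · rintro ⟨⟨t, w'⟩, hq, rfl⟩
        exact ⟨t, hq⟩
    rw [himg]
    exact isClosedMap_snd_of_compactSpace _ hD
end

section
/- Let (X_i)_{i ∈ I} be an arbitrary family of Δ-Hausdorff topological spaces. Then the product ∏_{i ∈ I} X_i, equipped with the product topology, is Δ-Hausdorff. -/
/-- The "local window" path: a continuous self-map of `[0,1]` whose range is the
set of points at distance at most `ε` from `t`. -/
noncomputable def deltaSig (t : unitInterval) (ε : ℝ) : C(unitInterval, unitInterval) :=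
  ⟨fun u => Set.projIcc 0 1 zero_le_one ((t : ℝ) - ε + (u : ℝ) * (2 * ε)),
    continuous_projIcc.comp (by continuity)⟩

lemma deltaSig_dist (t : unitInterval) {ε : ℝ} (hε : 0 < ε) (u : unitInterval) :
    |((deltaSig t ε u : ℝ)) - (t : ℝ)| ≤ ε := by
  have ht0 := t.2.1; have ht1 := t.2.2
  have hu0 := u.2.1; have hu1 := u.2.2
  show |max 0 (min 1 ((t : ℝ) - ε + (u : ℝ) * (2 * ε))) - (t : ℝ)| ≤ ε
  rw [abs_le]
  constructor
  · rcases le_total ((t : ℝ) - ε + (u : ℝ) * (2 * ε)) 1 with h | h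
    · rw [min_eq_right h]
      rcases le_total (0 : ℝ) ((t : ℝ) - ε + (u : ℝ) * (2 * ε)) with h2 | h2
      · rw [max_eq_right h2]; nlinarith
      · rw [max_eq_left h2]; nlinarith
    · rw [min_eq_left h, max_eq_right zero_le_one]; nlinarith
  · rcases le_total ((t : ℝ) - ε + (u : ℝ) * (2 * ε)) 1 with h | h
    · rw [min_eq_right h]
      rcases le_total (0 : ℝ) ((t : ℝ) - ε + (u : ℝ) * (2 * ε)) with h2 | h2
      · rw [max_eq_right h2]; nlinarith
      · rw [max_eq_left h2]; nlinarith
    · rw [min_eq_left h, max_eq_right zero_le_one]; nlinarith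

lemma deltaSig_surj (t : unitInterval) {ε : ℝ} (hε : 0 < ε) {s : unitInterval}
    (hs : |(s : ℝ) - (t : ℝ)| < ε) : s ∈ Set.range (deltaSig t ε) := by
  have h1 : -ε < (s : ℝ) - (t : ℝ) := (abs_lt.mp hs).1
  have h2 : (s : ℝ) - (t : ℝ) < ε := (abs_lt.mp hs).2
  refine ⟨⟨((s : ℝ) - (t : ℝ) + ε) / (2 * ε), ?_, ?_⟩, ?_⟩
  · exact div_nonneg (by linarith) (by positivity)
  · rw [div_le_one (by positivity)]; linarith
  · have hx : (t : ℝ) - ε + ((s : ℝ) - (t : ℝ) + ε) / (2 * ε) * (2 * ε) = (s : ℝ) := by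
      field_simp
      ring
    show Set.projIcc 0 1 zero_le_one _ = s
    rw [hx, Set.projIcc_of_mem zero_le_one s.2]

/-- An arbitrary product of Δ-Hausdorff spaces, with the product topology,
is Δ-Hausdorff. -/
theorem deltaHausdorff_pi {ι : Type*} (X : ι → Type*) [∀ i, TopologicalSpace (X i)]
    (hX : ∀ i, DeltaHausdorff (X i)) :
    DeltaHausdorff (∀ i, X i) := by
  intro f
  have hT1 : ∀ (i : ι) (x : X i), IsClosed ({x} : Set (X i)) := fun i x => by
    have h := hX i (ContinuousMap.const _ x)
    rwa [show Set.range ⇑(ContinuousMap.const unitInterval x) = {x} by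
      ext y; simp [eq_comm]] at h
  apply isClosed_of_closure_subset
  intro g hg
  -- Step 1: find `t` such that `g` is in the closure of the image of every small
  -- window around `t`.
  obtain ⟨t, ht⟩ : ∃ t : unitInterval, ∀ ε > (0 : ℝ),
      g ∈ closure (Set.range (f.comp (deltaSig t ε))) := by
    by_contra h
    push_neg at h
    choose ε hε hgε using h
    obtain ⟨s, -, hs⟩ := isCompact_univ.elim_nhds_subcover
      (fun t => Metric.ball t (ε t)) (fun t _ => Metric.ball_mem_nhds t (hε t))
    have hsub : Set.range f ⊆
        ⋃ x ∈ s, closure (Set.range (f.comp (deltaSig x (ε x)))) := by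
      rintro _ ⟨u, rfl⟩
      obtain ⟨x, hxs, hux⟩ := Set.mem_iUnion₂.mp (hs (Set.mem_univ u))
      refine Set.mem_iUnion₂.mpr ⟨x, hxs, subset_closure ?_⟩
      have : |(u : ℝ) - (x : ℝ)| < ε x := by
        simpa [Subtype.dist_eq, Real.dist_eq] using hux
      obtain ⟨v, hv⟩ := deltaSig_surj x (hε x) this
      exact ⟨v, by simp [hv]⟩
    have hclosed : IsClosed (⋃ x ∈ s, closure (Set.range (f.comp (deltaSig x (ε x))))) :=
      s.finite_toSet.isClosed_biUnion fun _ _ => isClosed_closure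
    obtain ⟨x, hxs, hgx⟩ := Set.mem_iUnion₂.mp (closure_minimal hsub hclosed hg)
    exact hgε x hgx
  -- Step 2: show `f t = g` coordinatewise.
  refine ⟨t, funext fun i => ?_⟩
  have hcont : Continuous fun s : unitInterval => f s i :=
    (continuous_apply i).comp f.continuous
  have hcl : IsClosed {s : unitInterval | f s i = g i} := (hT1 i (g i)).preimage hcont
  have hmem : t ∈ closure {s : unitInterval | f s i = g i} := by
    rw [Metric.mem_closure_iff]
    intro δ hδ
    have hδ2 : (0 : ℝ) < δ / 2 := by positivity
    have h1 := ht (δ / 2) hδ2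
    have h2 : g i ∈ closure (Set.range fun u => f (deltaSig t (δ / 2) u) i) := by
      have h3 := image_closure_subset_closure_image (f := fun p : ∀ j, X j => p i)
        (continuous_apply i) ⟨g, h1, rfl⟩
      simpa [← Set.range_comp, Function.comp_def] using h3
    have h4 : IsClosed (Set.range fun u => f (deltaSig t (δ / 2) u) i) :=
      hX i ⟨fun u => f (deltaSig t (δ / 2) u) i,
        hcont.comp (deltaSig t (δ / 2)).continuous⟩
    rw [h4.closure_eq] at h2
    obtain ⟨u, hu⟩ := h2
    refine ⟨deltaSig t (δ / 2) u, hu, ?_⟩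
    have hd := deltaSig_dist t hδ2 u
    have : dist t (deltaSig t (δ / 2) u) ≤ δ / 2 := by
      rw [Subtype.dist_eq, Real.dist_eq, abs_sub_comm]; exact hd
    linarith
  rw [hcl.closure_eq] at hmem
  exact hmem
end

section
/- Let X and Y be Δ-generated topological spaces with Y Δ-Hausdorff. Then the space C(X,Y) of continuous maps from X to Y, equipped with the Δ-kelleyfication of the compact-open topology, is Δ-Hausdorff. -/
open TopologicalSpace Topology Set

lemma DeltaHausdorff.t1 {Y : Type*} [TopologicalSpace Y] (hY : DeltaHausdorff Y) (y : Y) :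
    IsClosed ({y} : Set Y) := by
  have h := hY (ContinuousMap.const unitInterval y)
  rwa [ContinuousMap.coe_const, show Set.range (Function.const unitInterval y) = {y} from Set.range_const] at h

/-- Key lemma: if `Y` is Δ-Hausdorff, the "equalizer" of a continuous map `α : Z → Y` (with `Z`
pseudometric) and a path `β : I → Y` is closed in `Z × I`. -/
lemma deltaHausdorff_equalizer {Y : Type*} [TopologicalSpace Y] (hY : DeltaHausdorff Y)
    {Z : Type*} [PseudoMetricSpace Z] (α : C(Z, Y)) (β : C(unitInterval, Y)) :
    IsClosed {q : Z × unitInterval | α q.1 = β q.2} := by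
  apply IsSeqClosed.isClosed
  intro q L hq hL
  have hs : Filter.Tendsto (fun k => (q k).1) Filter.atTop (nhds L.1) :=
    ((continuous_fst.tendsto L).comp hL)
  have ht : Filter.Tendsto (fun k => (q k).2) Filter.atTop (nhds L.2) :=
    ((continuous_snd.tendsto L).comp hL)
  have hmem : β L.2 ∈ closure ({α L.1} : Set Y) := by
    rw [mem_closure_iff]
    intro U hU hβU
    set t0 : unitInterval := L.2 with ht0
    have hV : β ⁻¹' U ∈ nhds t0 := β.continuous.continuousAt.preimage_mem_nhds (hU.mem_nhds hβU)
    obtain ⟨ε, hε, hball⟩ := Metric.mem_nhds_iff.1 hV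
    -- the interval [a, b] around t0
    set a : unitInterval := ⟨max 0 ((t0 : ℝ) - ε / 2),
      le_max_left _ _, max_le zero_le_one (by linarith [t0.2.2])⟩ with ha
    set b : unitInterval := ⟨min 1 ((t0 : ℝ) + ε / 2),
      le_min zero_le_one (by linarith [t0.2.1]), min_le_left _ _⟩ with hb
    have hat0 : (a : ℝ) ≤ t0 := max_le t0.2.1 (by linarith)
    have ht0b : (t0 : ℝ) ≤ b := le_min t0.2.2 (by linarith)
    have hab : (a : ℝ) ≤ b := hat0.trans ht0b
    -- the clamping map
    have hcm : ∀ u : unitInterval, min (max (u : ℝ) a) b ∈ unitInterval := by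
      intro u
      constructor
      · exact le_min (le_max_of_le_right a.2.1) b.2.1
      · exact (min_le_right _ _).trans b.2.2
    let c : C(unitInterval, unitInterval) :=
      ⟨fun u => ⟨min (max (u : ℝ) a) b, hcm u⟩,
        Continuous.subtype_mk ((continuous_subtype_val.max continuous_const).min
          continuous_const) _⟩
    have hcab : ∀ u : unitInterval, (a : ℝ) ≤ c u ∧ (c u : ℝ) ≤ b := fun u =>
      ⟨le_min (le_max_right _ _) hab, min_le_right _ _⟩
    have hcball : ∀ u : unitInterval, dist (c u) t0 < ε := by
      intro u
      rw [Subtype.dist_eq, Real.dist_eq, abs_sub_lt_iff]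
      have h1 := (hcab u).1
      have h2 := (hcab u).2
      have h3 : (t0 : ℝ) - ε / 2 ≤ a := le_max_right _ _
      have h4 : (b : ℝ) ≤ (t0 : ℝ) + ε / 2 := min_le_right _ _
      constructor <;> linarith
    have hK : IsClosed (Set.range ⇑(β.comp c)) := hY _
    have hKU : Set.range ⇑(β.comp c) ⊆ U := by
      rintro _ ⟨u, rfl⟩
      exact hball (Metric.mem_ball.2 (hcball u))
    -- eventually the sequence is in K
    obtain ⟨m, hm⟩ := (Metric.tendsto_atTop.1 ht) (ε / 2) (half_pos hε)
    have hev : ∀ k ≥ m, α (q k).1 ∈ Set.range ⇑(β.comp c) := by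
      intro k hk
      have hd := hm k hk
      rw [Subtype.dist_eq, Real.dist_eq, abs_sub_lt_iff] at hd
      have h1 : (a : ℝ) ≤ (q k).2 := max_le (q k).2.2.1 (by linarith)
      have h2 : ((q k).2 : ℝ) ≤ b := le_min (q k).2.2.2 (by linarith)
      have hc : c ((q k).2) = (q k).2 := by
        apply Subtype.ext
        show min (max (((q k).2 : unitInterval) : ℝ) a) b = ((q k).2 : ℝ)
        rw [max_eq_left h1, min_eq_left h2]
      refine ⟨(q k).2, ?_⟩
      show β (c ((q k).2)) = α (q k).1
      rw [hc, ← hq k]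
    have hαL : α L.1 ∈ Set.range ⇑(β.comp c) := by
      refine hK.mem_of_tendsto ((α.continuous.tendsto L.1).comp hs) ?_
      exact Filter.eventually_atTop.2 ⟨m, hev⟩
    exact ⟨α L.1, hKU hαL, rfl⟩
  rw [(hY.t1 (α L.1)).closure_eq, Set.mem_singleton_iff] at hmem
  exact hmem.symm

/-- If `X` and `Y` are Δ-generated and `Y` is Δ-Hausdorff, then the space of continuous
maps `C(X, Y)`, equipped with the Δ-kelleyfication of the compact-open topology,
is Δ-Hausdorff. -/
theorem deltaHausdorff_continuousMapSpace
    {X Y : Type*} [TopologicalSpace X] [TopologicalSpace Y]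
    [DeltaGeneratedSpace X] [DeltaGeneratedSpace Y] (hY : DeltaHausdorff Y) :
    @DeltaHausdorff C(X, Y) (TopologicalSpace.deltaGenerated C(X, Y)) := by
  intro f
  have key : ∀ U : Set C(X, Y), IsOpen[deltaGenerated C(X, Y)] U ↔
      ∀ (n : ℕ) (p : C(Fin n → ℝ, C(X, Y))), IsOpen (p ⁻¹' U) := by
    intro U
    simp only [TopologicalSpace.deltaGenerated, isOpen_iSup_iff, isOpen_coinduced, Sigma.forall]
  rw [← @isOpen_compl_iff _ _ (deltaGenerated C(X, Y)), key]
  intro n p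
  rw [Set.preimage_compl, isOpen_compl_iff]
  have hf : Continuous (⇑f) :=
    continuous_le_rng (iSup_le fun g => g.2.continuous.coinduced_le)
      (@ContinuousMap.continuous_toFun _ _ _ (deltaGenerated C(X, Y)) f)
  let fc : C(unitInterval, C(X, Y)) := ⟨⇑f, hf⟩
  have hA : IsClosed {q : (Fin n → ℝ) × unitInterval | p q.1 = fc q.2} := by
    have heq : {q : (Fin n → ℝ) × unitInterval | p q.1 = fc q.2} =
        ⋂ x : X, {q : (Fin n → ℝ) × unitInterval | (p q.1) x = (fc q.2) x} := by
      ext q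
      simp [Set.mem_iInter, ContinuousMap.ext_iff]
    rw [heq]
    refine isClosed_iInter fun x => ?_
    exact deltaHausdorff_equalizer hY
      ((⟨fun g => g x, continuous_eval_const x⟩ : C(C(X, Y), Y)).comp p)
      ((⟨fun g => g x, continuous_eval_const x⟩ : C(C(X, Y), Y)).comp fc)
  have himg : p ⁻¹' (Set.range ⇑f) =
      Prod.fst '' {q : (Fin n → ℝ) × unitInterval | p q.1 = fc q.2} := by
    ext s
    constructor
    · rintro ⟨t, ht⟩
      exact ⟨(s, t), ht.symm, rfl⟩
    · rintro ⟨⟨s', t⟩, hq, rfl⟩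
      exact ⟨t, hq.symm⟩
  rw [himg]
  exact isClosedMap_fst_of_compactSpace _ hA
end

section
/- Let X be a Δ-generated topological space and let r be an equivalence relation on X. Then the quotient space X/r, equipped with the quotient topology, is Δ-Hausdorff if and only if the set {(x,y) ∈ X × X : x r y} is a closed subset of the Δ-kelleyfication of the product space X × X. -/
open Topology

namespace DHQAux

open Filter Set TopologicalSpace

/-! ### A continuous "path" through a convergent sequence

Given a sequence `c : ℕ → E` in a normed space converging to `l`, we build a continuous
map `g : ℝ → E` with `g (1/(k+1)) = c k`, `g 0 = l`, and all values of `g` at distance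
from `l` at most the distance of some `c k` from `l`. -/

/-- A tent function supported near `1/(n+1)`, with small enough support that the supports for
different `n` are pairwise disjoint. -/
noncomputable def tent (n : ℕ) (u : ℝ) : ℝ :=
  max 0 (1 - (4 * ((n : ℝ) + 1) * ((n : ℝ) + 2)) * |u - 1 / ((n : ℝ) + 1)|)

lemma tent_continuous (n : ℕ) : Continuous (tent n) := by
  unfold tent; fun_prop

lemma tent_nonneg (n : ℕ) (u : ℝ) : 0 ≤ tent n u := le_max_left _ _

lemma tent_le_one (n : ℕ) (u : ℝ) : tent n u ≤ 1 := by
  have h : (0:ℝ) ≤ (4 * ((n : ℝ) + 1) * ((n : ℝ) + 2)) * |u - 1 / ((n : ℝ) + 1)| := by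
    positivity
  simp only [tent, max_le_iff]
  constructor <;> linarith

lemma tent_node (n : ℕ) : tent n (1 / ((n : ℝ) + 1)) = 1 := by
  simp [tent]

lemma tent_support {n : ℕ} {u : ℝ} (h : tent n u ≠ 0) :
    |u - 1 / ((n : ℝ) + 1)| < 1 / (4 * ((n : ℝ) + 1) * ((n : ℝ) + 2)) := by
  by_contra h'
  push_neg at h'
  apply h
  have hK : (0:ℝ) < 4 * ((n : ℝ) + 1) * ((n : ℝ) + 2) := by positivity
  have h1 : (1:ℝ) ≤ (4 * ((n : ℝ) + 1) * ((n : ℝ) + 2)) * |u - 1 / ((n : ℝ) + 1)| := by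
    calc (1:ℝ) = (4 * ((n : ℝ) + 1) * ((n : ℝ) + 2)) * (1 / (4 * ((n : ℝ) + 1) * ((n : ℝ) + 2))) := by
          field_simp
      _ ≤ _ := by
          apply mul_le_mul_of_nonneg_left h' hK.le
  exact max_eq_left (by linarith)

lemma tent_eq_zero_of_far {n : ℕ} {u : ℝ}
    (h : 1 / (4 * ((n : ℝ) + 1) * ((n : ℝ) + 2)) ≤ |u - 1 / ((n : ℝ) + 1)|) : tent n u = 0 := by
  by_contra h'
  exact absurd h (not_le.mpr (tent_support h'))

lemma tent_eq_zero_of_nonpos {n : ℕ} {u : ℝ} (hu : u ≤ 0) : tent n u = 0 := by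
  apply tent_eq_zero_of_far
  have h1 : 1 / (4 * ((n : ℝ) + 1) * ((n : ℝ) + 2)) ≤ 1 / ((n : ℝ) + 1) := by
    apply one_div_le_one_div_of_le (by positivity)
    nlinarith [Nat.cast_nonneg (α := ℝ) n]
  have h2 : 1 / ((n : ℝ) + 1) ≤ |u - 1 / ((n : ℝ) + 1)| := by
    have : 1 / ((n : ℝ) + 1) - u ≤ |u - 1 / ((n : ℝ) + 1)| := by
      rw [abs_sub_comm]; exact le_abs_self _
    linarith
  linarith

lemma tent_ne_zero_lower {n : ℕ} {u : ℝ} (h : tent n u ≠ 0) : 1 / ((n : ℝ) + 2) < u := by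
  have hs := tent_support h
  have h1 : 1 / ((n : ℝ) + 1) - u ≤ |u - 1 / ((n : ℝ) + 1)| := by
    rw [abs_sub_comm]; exact le_abs_self _
  have h2 : 1 / ((n : ℝ) + 1) - 1 / ((n : ℝ) + 2) = 1 / (((n : ℝ) + 1) * ((n : ℝ) + 2)) := by
    field_simp
    ring
  have h3 : 1 / (4 * ((n : ℝ) + 1) * ((n : ℝ) + 2)) ≤
      (1 / (((n : ℝ) + 1) * ((n : ℝ) + 2))) / 2 := by
    rw [div_div]
    apply one_div_le_one_div_of_le (by positivity)
    nlinarith [Nat.cast_nonneg (α := ℝ) n]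
  have h4 : (0:ℝ) < 1 / (((n : ℝ) + 1) * ((n : ℝ) + 2)) := by positivity
  linarith

lemma tent_ne_zero_upper {n : ℕ} {u : ℝ} (h : tent n u ≠ 0) : u < 2 / ((n : ℝ) + 1) := by
  have hs := tent_support h
  have h1 : u - 1 / ((n : ℝ) + 1) ≤ |u - 1 / ((n : ℝ) + 1)| := le_abs_self _
  have h3 : 1 / (4 * ((n : ℝ) + 1) * ((n : ℝ) + 2)) ≤ 1 / ((n : ℝ) + 1) := by
    apply one_div_le_one_div_of_le (by positivity)
    nlinarith [Nat.cast_nonneg (α := ℝ) n]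
  have : 2 / ((n : ℝ) + 1) = 1 / ((n : ℝ) + 1) + 1 / ((n : ℝ) + 1) := by ring
  linarith

lemma tent_disjoint_aux {n m : ℕ} {u : ℝ} (hnm : n < m) (h : tent n u ≠ 0)
    (h' : tent m u ≠ 0) : False := by
  have h1 := tent_support h
  have h2 := tent_support h'
  have hm1 : (n : ℝ) + 1 ≤ (m : ℝ) := by exact_mod_cast Nat.succ_le_of_lt hnm
  have hgap : 1 / (((n : ℝ) + 1) * ((n : ℝ) + 2)) ≤ 1 / ((n : ℝ) + 1) - 1 / ((m : ℝ) + 1) := by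
    have hle : 1 / ((m : ℝ) + 1) ≤ 1 / ((n : ℝ) + 2) := by
      apply one_div_le_one_div_of_le (by positivity) (by linarith)
    have heq : 1 / ((n : ℝ) + 1) - 1 / ((n : ℝ) + 2) = 1 / (((n : ℝ) + 1) * ((n : ℝ) + 2)) := by
      field_simp; ring
    linarith
  have hr1 : 1 / (4 * ((n : ℝ) + 1) * ((n : ℝ) + 2)) ≤
      (1 / (((n : ℝ) + 1) * ((n : ℝ) + 2))) / 4 := by
    rw [div_div]
    apply one_div_le_one_div_of_le (by positivity)
    nlinarith [Nat.cast_nonneg (α := ℝ) n]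
  have hr2 : 1 / (4 * ((m : ℝ) + 1) * ((m : ℝ) + 2)) ≤
      (1 / (((n : ℝ) + 1) * ((n : ℝ) + 2))) / 4 := by
    rw [div_div]
    apply one_div_le_one_div_of_le (by positivity)
    nlinarith [Nat.cast_nonneg (α := ℝ) n, Nat.cast_nonneg (α := ℝ) m]
  have htri : 1 / ((n : ℝ) + 1) - 1 / ((m : ℝ) + 1) ≤
      |u - 1 / ((n : ℝ) + 1)| + |u - 1 / ((m : ℝ) + 1)| := by
    calc 1 / ((n : ℝ) + 1) - 1 / ((m : ℝ) + 1)
        = -(u - 1 / ((n : ℝ) + 1)) + (u - 1 / ((m : ℝ) + 1)) := by ring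
      _ ≤ |(-(u - 1 / ((n : ℝ) + 1))) + (u - 1 / ((m : ℝ) + 1))| := le_abs_self _
      _ ≤ |(-(u - 1 / ((n : ℝ) + 1)))| + |u - 1 / ((m : ℝ) + 1)| := abs_add_le _ _
      _ = |u - 1 / ((n : ℝ) + 1)| + |u - 1 / ((m : ℝ) + 1)| := by rw [abs_neg]
  have h4 : (0:ℝ) < 1 / (((n : ℝ) + 1) * ((n : ℝ) + 2)) := by positivity
  linarith

lemma tent_disjoint {n m : ℕ} {u : ℝ} (hnm : n ≠ m) (h : tent n u ≠ 0) : tent m u = 0 := by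
  by_contra h'
  rcases hnm.lt_or_gt with hlt | hlt
  · exact tent_disjoint_aux hlt h h'
  · exact tent_disjoint_aux hlt h' h

variable {E : Type*} [NormedAddCommGroup E] [NormedSpace ℝ E]

/-- A continuous map through the points of a sequence. -/
noncomputable def seqPath (c : ℕ → E) (l : E) (u : ℝ) : E :=
  l + ∑' n, tent n u • (c n - l)

lemma seqPath_eq_single {c : ℕ → E} {l : E} {u : ℝ} {k : ℕ} (hk : tent k u ≠ 0) :
    seqPath c l u = l + tent k u • (c k - l) := by
  unfold seqPath
  congr 1
  exact tsum_eq_single k fun m hm => by rw [tent_disjoint (Ne.symm hm) hk, zero_smul]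

lemma seqPath_eq_of_all_zero {c : ℕ → E} {l : E} {u : ℝ} (h : ∀ k, tent k u = 0) :
    seqPath c l u = l := by
  unfold seqPath
  simp [h]

lemma seqPath_node (c : ℕ → E) (l : E) (k : ℕ) : seqPath c l (1 / ((k : ℝ) + 1)) = c k := by
  have hk : tent k (1 / ((k : ℝ) + 1)) ≠ 0 := by rw [tent_node]; norm_num
  rw [seqPath_eq_single hk, tent_node]
  simp

lemma seqPath_zero (c : ℕ → E) (l : E) : seqPath c l 0 = l :=
  seqPath_eq_of_all_zero fun _ => tent_eq_zero_of_nonpos le_rfl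

lemma seqPath_bound (c : ℕ → E) (l : E) (u : ℝ) :
    ∃ k, ‖seqPath c l u - l‖ ≤ ‖c k - l‖ := by
  by_cases h : ∀ k, tent k u = 0
  · exact ⟨0, by rw [seqPath_eq_of_all_zero h]; simp⟩
  · push_neg at h
    obtain ⟨k, hk⟩ := h
    refine ⟨k, ?_⟩
    rw [seqPath_eq_single hk, add_sub_cancel_left, norm_smul, Real.norm_eq_abs,
      abs_of_nonneg (tent_nonneg k u)]
    exact mul_le_of_le_one_left (norm_nonneg _) (tent_le_one k u)

lemma seqPath_continuous {c : ℕ → E} {l : E} (hc : Tendsto c atTop (𝓝 l)) :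
    Continuous (seqPath c l) := by
  rw [continuous_iff_continuousAt]
  intro u₀
  rcases lt_trichotomy u₀ 0 with h0 | h0 | h0
  · refine ContinuousAt.congr (continuousAt_const (y := l)) ?_
    filter_upwards [Iio_mem_nhds h0] with u hu
    exact (seqPath_eq_of_all_zero fun k => tent_eq_zero_of_nonpos (le_of_lt hu)).symm
  · -- continuity at 0
    subst h0
    rw [Metric.continuousAt_iff]
    intro ε hε
    obtain ⟨N, hN⟩ := Metric.tendsto_atTop.mp hc ε hε
    refine ⟨1 / ((N : ℝ) + 2), by positivity, fun u hu => ?_⟩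
    rw [seqPath_zero]
    rcases le_or_gt u 0 with hu0 | hu0
    · rw [seqPath_eq_of_all_zero fun k => tent_eq_zero_of_nonpos hu0]
      simpa using hε
    · by_cases hall : ∀ k, tent k u = 0
      · rw [seqPath_eq_of_all_zero hall]
        simpa using hε
      · push_neg at hall
        obtain ⟨k, hk⟩ := hall
        have hlow := tent_ne_zero_lower hk
        have hud : u < 1 / ((N : ℝ) + 2) := by
          have : |u - 0| < 1 / ((N : ℝ) + 2) := by simpa [Real.dist_eq] using hu
          calc u = u - 0 := by ring
            _ ≤ |u - 0| := le_abs_self _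
            _ < _ := this
        have hNk : N ≤ k := by
          by_contra hc'
          push_neg at hc'
          have : (k : ℝ) + 2 ≤ (N : ℝ) + 2 := by
            have : (k : ℝ) ≤ (N : ℝ) := by exact_mod_cast hc'.le
            linarith
          have : 1 / ((N : ℝ) + 2) ≤ 1 / ((k : ℝ) + 2) :=
            one_div_le_one_div_of_le (by positivity) this
          linarith
        rw [seqPath_eq_single hk, dist_eq_norm, add_sub_cancel_left, norm_smul,
          Real.norm_eq_abs, abs_of_nonneg (tent_nonneg k u)]
        calc tent k u * ‖c k - l‖ ≤ ‖c k - l‖ :=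
              mul_le_of_le_one_left (norm_nonneg _) (tent_le_one k u)
          _ = dist (c k) l := (dist_eq_norm _ _).symm
          _ < ε := hN k hNk
  · -- continuity at u₀ > 0 : locally a finite sum
    obtain ⟨N, hN⟩ := exists_nat_gt (2 / u₀)
    have h2u : 2 < (N : ℝ) * u₀ := by
      rwa [div_lt_iff₀ h0] at hN
    have hNu : 2 / ((N : ℝ) + 1) < u₀ := by
      rw [div_lt_iff₀ (by positivity)]
      nlinarith
    have key : ∀ u ∈ Set.Ioi (2 / ((N : ℝ) + 1)), ∀ n, N ≤ n → tent n u = 0 := by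
      intro u hu n hn
      by_contra h'
      have hup := tent_ne_zero_upper h'
      have : 2 / ((n : ℝ) + 1) ≤ 2 / ((N : ℝ) + 1) := by
        apply div_le_div_of_nonneg_left (by norm_num) (by positivity)
        have : (N : ℝ) ≤ (n : ℝ) := by exact_mod_cast hn
        linarith
      have hu' : 2 / ((N : ℝ) + 1) < u := hu
      linarith
    have heq : ∀ u ∈ Set.Ioi (2 / ((N : ℝ) + 1)),
        seqPath c l u = l + ∑ n ∈ Finset.range N, tent n u • (c n - l) := by
      intro u hu
      unfold seqPath
      congr 1
      refine tsum_eq_sum fun b hb => ?_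
      rw [key u hu b (by simpa using hb), zero_smul]
    have hcont : Continuous fun u => l + ∑ n ∈ Finset.range N, tent n u • (c n - l) := by
      refine continuous_const.add (continuous_finset_sum _ fun n _ => ?_)
      exact (tent_continuous n).smul continuous_const
    refine ContinuousAt.congr hcont.continuousAt ?_
    filter_upwards [Ioi_mem_nhds hNu] with u hu
    exact (heq u hu).symm

/-! ### Closedness in the delta-generated topology -/

lemma isClosed_deltaGenerated_iff {Z : Type*} [TopologicalSpace Z] {S : Set Z} :
    IsClosed[deltaGenerated Z] S ↔ ∀ (n : ℕ) (p : C(Fin n → ℝ, Z)), IsClosed (p ⁻¹' S) := by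
  rw [← @isOpen_compl_iff _ _ (deltaGenerated Z)]
  simp only [deltaGenerated, isOpen_iSup_iff, isOpen_coinduced, Sigma.forall]
  simp_rw [Set.preimage_compl, isOpen_compl_iff]

lemma DeltaGeneratedSpace.isClosed_iff' {X : Type*} [TopologicalSpace X] [DeltaGeneratedSpace X]
    {S : Set X} :
    IsClosed S ↔ ∀ (n : ℕ) (p : C(Fin n → ℝ, X)), IsClosed (p ⁻¹' S) := by
  rw [← isOpen_compl_iff, IsGeneratedBy.isOpen_iff (fun n : ℕ => Fin n → ℝ)]
  simp_rw [Set.preimage_compl, isOpen_compl_iff]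

/-- Preimages of `deltaGenerated`-closed sets under continuous maps from `ℝ` are closed. -/
lemma isClosed_preimage_real {Z : Type*} [TopologicalSpace Z] {S : Set Z}
    (hS : IsClosed[deltaGenerated Z] S) {w : ℝ → Z} (hw : Continuous w) :
    IsClosed (w ⁻¹' S) := by
  let e : (Fin 1 → ℝ) ≃ₜ ℝ := Homeomorph.funUnique (Fin 1) ℝ
  have h := isClosed_deltaGenerated_iff.mp hS 1 ⟨w ∘ e, hw.comp e.continuous⟩
  have h2 : (⇑(⟨w ∘ e, hw.comp e.continuous⟩ : C(Fin 1 → ℝ, Z))) ⁻¹' S =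
      e ⁻¹' (w ⁻¹' S) := rfl
  rw [h2, Homeomorph.isClosed_preimage] at h
  exact h

end DHQAux

open DHQAux Filter Set TopologicalSpace in
/-- In a Δ-Hausdorff space, the coincidence set of two continuous maps from a normed space
is closed. -/
lemma DeltaHausdorff.isClosed_coincidence {Q : Type*} [TopologicalSpace Q]
    (hQ : DeltaHausdorff Q) {E : Type*} [NormedAddCommGroup E] [NormedSpace ℝ E]
    {p1 p2 : E → Q} (h1 : Continuous p1) (h2 : Continuous p2) :
    IsClosed {z : E | p1 z = p2 z} := by
  apply IsSeqClosed.isClosed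
  intro z z₀ hmem hz
  show p1 z₀ = p2 z₀
  have hT1 : ∀ y : Q, IsClosed ({y} : Set Q) := fun y => by
    have h := hQ (ContinuousMap.const _ y)
    have he : ({y} : Set Q) = Set.range ⇑(ContinuousMap.const unitInterval y) := by
      ext t
      simp [eq_comm]
    rwa [he]
  have key : ∀ m : ℕ, ∃ v : E, p2 v = p1 z₀ ∧ ∃ k, ‖v - z₀‖ ≤ ‖z (k + m) - z₀‖ := by
    intro m
    set g : ℝ → E := seqPath (fun k => z (k + m)) z₀ with hg_def
    have hg : Continuous g := seqPath_continuous (hz.comp (tendsto_add_atTop_nat m))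
    set θ : C(unitInterval, Q) := ⟨fun t => p2 (g t), h2.comp (hg.comp continuous_subtype_val)⟩
      with hθ_def
    have hmemF : ∀ j : ℕ, p1 (z (j + m)) ∈ Set.range θ := by
      intro j
      have hjI : (1 / ((j : ℝ) + 1)) ∈ unitInterval := by
        constructor
        · positivity
        · rw [div_le_one (by positivity)]; linarith [Nat.cast_nonneg (α := ℝ) j]
      refine ⟨⟨1 / ((j : ℝ) + 1), hjI⟩, ?_⟩
      show p2 (g (1 / ((j : ℝ) + 1))) = p1 (z (j + m))
      rw [hg_def, seqPath_node, ← hmem (j + m)]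
    have hten : Tendsto (fun j => p1 (z (j + m))) atTop (𝓝 (p1 z₀)) :=
      (h1.tendsto z₀).comp (hz.comp (tendsto_add_atTop_nat m))
    obtain ⟨t, ht⟩ := (hQ θ).mem_of_tendsto hten (Eventually.of_forall hmemF)
    exact ⟨g t, ht, seqPath_bound _ _ _⟩
  choose v hv hk using key
  have hvt : Tendsto v atTop (𝓝 z₀) := by
    rw [Metric.tendsto_atTop]
    intro ε hε
    obtain ⟨M, hM⟩ := Metric.tendsto_atTop.mp hz ε hε
    refine ⟨M, fun m hm => ?_⟩
    obtain ⟨k, hk'⟩ := hk m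
    calc dist (v m) z₀ = ‖v m - z₀‖ := dist_eq_norm _ _
      _ ≤ ‖z (k + m) - z₀‖ := hk'
      _ = dist (z (k + m)) z₀ := (dist_eq_norm _ _).symm
      _ < ε := hM _ (le_trans hm (Nat.le_add_left m k))
  have hten2 : Tendsto (fun m => p2 (v m)) atTop (𝓝 (p2 z₀)) := (h2.tendsto z₀).comp hvt
  have hfin := (hT1 (p1 z₀)).mem_of_tendsto hten2
    (Eventually.of_forall fun m => by simp [hv m])
  exact (Set.mem_singleton_iff.mp hfin).symm

open DHQAux Filter Set TopologicalSpace in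
/-- Let `r` be an equivalence relation on a Δ-generated space `X`.  The quotient space
`X/r` with the quotient topology is Δ-Hausdorff iff the graph of `r` is closed in the
Δ-kelleyfication of the product `X × X`. -/
theorem deltaHausdorff_quotient_setoid_iff
    {X : Type*} [TopologicalSpace X] [DeltaGeneratedSpace X] (r : Setoid X) :
    DeltaHausdorff (Quotient r) ↔
      IsClosed[TopologicalSpace.deltaGenerated (X × X)] {p : X × X | r.r p.1 p.2} := by
  letI := r
  have hqm : IsQuotientMap (Quotient.mk r : X → Quotient r) := isQuotientMap_quotient_mk'
  have hqeq : ∀ x y : X, Quotient.mk r x = Quotient.mk r y ↔ r.r x y := fun x y => Quotient.eq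
  constructor
  · intro hQ
    rw [isClosed_deltaGenerated_iff]
    intro n p
    have heq : p ⁻¹' {p : X × X | r.r p.1 p.2} =
        {z | Quotient.mk r (p z).1 = Quotient.mk r (p z).2} := by
      ext z
      simp [hqeq]
    rw [heq]
    exact hQ.isClosed_coincidence
      (hqm.continuous.comp (continuous_fst.comp p.continuous))
      (hqm.continuous.comp (continuous_snd.comp p.continuous))
  · intro hG
    -- coincidence sets of maps into the quotient, tested from ℝ and ℝⁿ
    have hGr : ∀ {u v : ℝ → X}, Continuous u → Continuous v →
        IsClosed {t : ℝ | r.r (u t) (v t)} := by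
      intro u v hu hv
      exact isClosed_preimage_real hG (w := fun t => (u t, v t)) (hu.prodMk hv)
    have hGrn : ∀ {n : ℕ} {u v : (Fin n → ℝ) → X}, Continuous u → Continuous v →
        IsClosed {z | r.r (u z) (v z)} :=
      fun {n u v} hu hv =>
        isClosed_deltaGenerated_iff.mp hG n ⟨fun z => (u z, v z), hu.prodMk hv⟩
    -- the quotient is T1
    have hT1 : ∀ y : Quotient r, IsClosed ({y} : Set (Quotient r)) := by
      intro y
      obtain ⟨x₀, rfl⟩ := Quotient.exists_rep y
      rw [← hqm.isClosed_preimage]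
      have heq : (Quotient.mk r) ⁻¹' {Quotient.mk r x₀} = {x | r.r x x₀} := by
        ext x; simp [hqeq]
      rw [heq, DeltaGeneratedSpace.isClosed_iff']
      intro n p
      exact hGrn p.continuous continuous_const
    -- saturated images of paths are closed in the quotient
    have hSat : ∀ a : C(unitInterval, X), IsClosed (Quotient.mk r '' (Set.range a)) := by
      intro a
      rw [← hqm.isClosed_preimage]
      have heq : (Quotient.mk r) ⁻¹' (Quotient.mk r '' (Set.range a)) =
          {x | ∃ t, r.r x (a t)} := by
        ext x
        constructor
        · rintro ⟨y, ⟨t, rfl⟩, hy⟩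
          exact ⟨t, r.symm ((hqeq _ _).mp hy)⟩
        · rintro ⟨t, ht⟩
          exact ⟨a t, ⟨t, rfl⟩, (hqeq _ _).mpr (r.symm ht)⟩
      rw [heq, DeltaGeneratedSpace.isClosed_iff']
      intro n p
      apply IsSeqClosed.isClosed
      intro z z₀ hmem hz
      choose t ht using hmem
      obtain ⟨s₀v, hs₀mem, φ, hφ, hst⟩ :=
        (isCompact_Icc (a := (0:ℝ)) (b := 1)).tendsto_subseq (x := fun j => ((t j : ℝ)))
          (fun j => (t j).2)
      set g1 : ℝ → (Fin n → ℝ) := seqPath (fun k => z (φ k)) z₀ with hg1_def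
      have hg1 : Continuous g1 := seqPath_continuous (hz.comp hφ.tendsto_atTop)
      set g2r : ℝ → ℝ := seqPath (fun k => (t (φ k) : ℝ)) s₀v with hg2r_def
      have hg2r : Continuous g2r := seqPath_continuous hst
      set g2 : ℝ → unitInterval := fun u => Set.projIcc 0 1 zero_le_one (g2r u) with hg2_def
      have hg2 : Continuous g2 := continuous_projIcc.comp hg2r
      have hC : IsClosed {u : ℝ | r.r (p (g1 u)) (a (g2 u))} :=
        hGr (p.continuous.comp hg1) (a.continuous.comp hg2)
      have hnode : ∀ k : ℕ, r.r (p (g1 (1 / ((k : ℝ) + 1)))) (a (g2 (1 / ((k : ℝ) + 1)))) := by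
        intro k
        have e1 : g1 (1 / ((k : ℝ) + 1)) = z (φ k) := by rw [hg1_def, seqPath_node]
        have e2 : g2 (1 / ((k : ℝ) + 1)) = t (φ k) := by
          rw [hg2_def]
          show Set.projIcc 0 1 zero_le_one (g2r (1 / ((k : ℝ) + 1))) = t (φ k)
          rw [hg2r_def, seqPath_node]
          exact Set.projIcc_val zero_le_one _
        rw [e1, e2]
        exact ht (φ k)
      have h0 : r.r (p (g1 0)) (a (g2 0)) := by
        have := hC.mem_of_tendsto
          (tendsto_one_div_add_atTop_nhds_zero_nat)
          (Eventually.of_forall hnode)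
        exact this
      have e1 : g1 0 = z₀ := seqPath_zero _ _
      have e2 : g2 0 = ⟨s₀v, hs₀mem⟩ := by
        rw [hg2_def]
        show Set.projIcc 0 1 zero_le_one (g2r 0) = _
        rw [hg2r_def, seqPath_zero]
        exact Set.projIcc_of_mem zero_le_one hs₀mem
      rw [e1, e2] at h0
      exact ⟨_, h0⟩
    -- main argument
    intro f
    rw [← hqm.isClosed_preimage, DeltaGeneratedSpace.isClosed_iff']
    intro n p
    apply IsSeqClosed.isClosed
    intro z z₀ hmem hz
    choose s hs using hmem
    obtain ⟨s₀v, hs₀mem, φ, hφ, hst⟩ :=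
      (isCompact_Icc (a := (0:ℝ)) (b := 1)).tendsto_subseq (x := fun j => ((s j : ℝ)))
        (fun j => (s j).2)
    set s₀ : unitInterval := ⟨s₀v, hs₀mem⟩ with hs₀_def
    have hsconv : Tendsto (fun k => s (φ k)) atTop (𝓝 s₀) := by
      rw [tendsto_subtype_rng]
      exact hst
    have hzφ : Tendsto (fun k => z (φ k)) atTop (𝓝 z₀) := hz.comp hφ.tendsto_atTop
    have key : ∀ m : ℕ, ∃ v : Fin n → ℝ, Quotient.mk r (p v) = f s₀ ∧
        ∃ k, ‖v - z₀‖ ≤ ‖z (φ (k + m)) - z₀‖ := by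
      intro m
      set g : ℝ → (Fin n → ℝ) := seqPath (fun k => z (φ (k + m))) z₀ with hg_def
      have hg : Continuous g := seqPath_continuous (hzφ.comp (tendsto_add_atTop_nat m))
      set aP : C(unitInterval, X) :=
        ⟨fun w => p (g w), p.continuous.comp (hg.comp continuous_subtype_val)⟩ with haP_def
      have hmemF : ∀ j : ℕ, f (s (φ (j + m))) ∈ Quotient.mk r '' (Set.range aP) := by
        intro j
        have hjI : (1 / ((j : ℝ) + 1)) ∈ unitInterval := by
          constructor
          · positivity
          · rw [div_le_one (by positivity)]; linarith [Nat.cast_nonneg (α := ℝ) j]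
        refine ⟨aP ⟨1 / ((j : ℝ) + 1), hjI⟩, ⟨⟨1 / ((j : ℝ) + 1), hjI⟩, rfl⟩, ?_⟩
        show Quotient.mk r (p (g (1 / ((j : ℝ) + 1)))) = f (s (φ (j + m)))
        rw [hg_def, seqPath_node]
        exact (hs (φ (j + m))).symm
      have htend : Tendsto (fun j => f (s (φ (j + m)))) atTop (𝓝 (f s₀)) :=
        (f.continuous.tendsto s₀).comp (hsconv.comp (tendsto_add_atTop_nat m))
      obtain ⟨x, ⟨w, rfl⟩, hx⟩ :=
        (hSat aP).mem_of_tendsto htend (Eventually.of_forall hmemF)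
      exact ⟨g w, hx, seqPath_bound _ _ _⟩
    choose v hv hk using key
    have hvt : Tendsto v atTop (𝓝 z₀) := by
      rw [Metric.tendsto_atTop]
      intro ε hε
      obtain ⟨M, hM⟩ := Metric.tendsto_atTop.mp hzφ ε hε
      refine ⟨M, fun m hm => ?_⟩
      obtain ⟨k, hk'⟩ := hk m
      calc dist (v m) z₀ = ‖v m - z₀‖ := dist_eq_norm _ _
        _ ≤ ‖z (φ (k + m)) - z₀‖ := hk'
        _ = dist (z (φ (k + m))) z₀ := (dist_eq_norm _ _).symm
        _ < ε := hM _ (le_trans hm (Nat.le_add_left m k))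
    have hten2 : Tendsto (fun m => Quotient.mk r (p (v m))) atTop
        (𝓝 (Quotient.mk r (p z₀))) :=
      ((hqm.continuous.comp p.continuous).tendsto z₀).comp hvt
    have hT1' := hT1 (f s₀)
    have hfin := hT1'.mem_of_tendsto hten2 (Eventually.of_forall fun m => by simp [hv m])
    exact ⟨s₀, (Set.mem_singleton_iff.mp hfin).symm⟩
end

section
/- Let X be a Δ-generated Δ-Hausdorff topological space and let A be a closed subset of X. Then the quotient space X/A, obtained by collapsing A to a single point and equipped with the quotient topology, is Δ-Hausdorff. -/
open Set Filter Topology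

noncomputable section

namespace DHQaux

variable {E : Type*} [NormedAddCommGroup E] [NormedSpace ℝ E]

/-- Piecewise-linear interpolation of a sequence. -/
def seqPath (u : ℕ → E) (s : ℝ) : E :=
  u 0 + ∑ k ∈ Finset.range (⌈s⌉₊ + 1), (min 1 (max 0 (s - k))) • (u (k + 1) - u k)

lemma sum_aux (u : ℕ → E) (s : ℝ) {M N : ℕ} (hMN : M ≤ N) (hM : s < M) :
    ∑ k ∈ Finset.range N, (min 1 (max 0 (s - k))) • (u (k + 1) - u k)
      = ∑ k ∈ Finset.range M, (min 1 (max 0 (s - k))) • (u (k + 1) - u k) := by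
  refine (Finset.sum_subset (Finset.range_subset_range.2 hMN) ?_).symm
  intro k _ hk
  rw [Finset.mem_range, not_lt] at hk
  have : s < k := lt_of_lt_of_le hM (by exact_mod_cast hk)
  rw [max_eq_left (by linarith), min_eq_right zero_le_one, zero_smul]

lemma lt_ceil_add_one (s : ℝ) : s < (⌈s⌉₊ : ℝ) + 1 := by
  have := Nat.le_ceil s
  linarith

lemma seqPath_eq (u : ℕ → E) {M : ℕ} {s : ℝ} (hs : s < M) :
    seqPath u s = u 0 + ∑ k ∈ Finset.range M, (min 1 (max 0 (s - k))) • (u (k + 1) - u k) := by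
  rcases le_total (⌈s⌉₊ + 1) M with h | h
  · rw [seqPath, sum_aux u s h (by push_cast; exact lt_ceil_add_one s)]
  · rw [seqPath, sum_aux u s h hs]

lemma continuous_seqPath (u : ℕ → E) : Continuous (seqPath u) := by
  rw [continuous_iff_continuousAt]
  intro s₀
  have hM : s₀ < ((⌈s₀⌉₊ + 1 : ℕ) : ℝ) := by push_cast; exact lt_ceil_add_one s₀
  set M := ⌈s₀⌉₊ + 1 with hMdef
  have hcont : Continuous fun s : ℝ =>
      u 0 + ∑ k ∈ Finset.range M, (min 1 (max 0 (s - k))) • (u (k + 1) - u k) := by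
    refine continuous_const.add (continuous_finset_sum _ fun k _ => ?_)
    exact (continuous_const.min (continuous_const.max (continuous_id.sub continuous_const))).smul
      continuous_const
  refine hcont.continuousAt.congr ?_
  filter_upwards [Filter.Tendsto.eventually_lt_const hM (f := fun s : ℝ => s) tendsto_id] with s hs
  exact (seqPath_eq u hs).symm

lemma seqPath_nat (u : ℕ → E) (k : ℕ) : seqPath u (k : ℝ) = u k := by
  have : seqPath u (k : ℝ) = u 0 + ∑ j ∈ Finset.range (k + 1),
      (min 1 (max 0 ((k : ℝ) - j))) • (u (j + 1) - u j) :=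
    seqPath_eq u (by exact_mod_cast Nat.lt_succ_self k)
  rw [this, Finset.sum_range_succ]
  have h1 : (min 1 (max 0 ((k : ℝ) - k))) • (u (k + 1) - u k) = 0 := by
    rw [sub_self, max_self, min_eq_right zero_le_one, zero_smul]
  have h2 : ∑ j ∈ Finset.range k, (min 1 (max 0 ((k : ℝ) - j))) • (u (j + 1) - u j)
      = ∑ j ∈ Finset.range k, (u (j + 1) - u j) := by
    refine Finset.sum_congr rfl fun j hj => ?_
    rw [Finset.mem_range] at hj
    have : (1 : ℝ) ≤ (k : ℝ) - j := by
      have : (j : ℝ) + 1 ≤ k := by exact_mod_cast hj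
      linarith
    rw [max_eq_right (by linarith), min_eq_left this, one_smul]
  rw [h1, h2, add_zero, Finset.sum_range_sub]
  abel

lemma seqPath_formula (u : ℕ → E) (m : ℕ) {s : ℝ} (h1 : (m : ℝ) ≤ s) (h2 : s ≤ (m : ℝ) + 1) :
    seqPath u s = u m + (s - m) • (u (m + 1) - u m) := by
  have : seqPath u s = u 0 + ∑ j ∈ Finset.range (m + 1 + 1),
      (min 1 (max 0 (s - j))) • (u (j + 1) - u j) :=
    seqPath_eq u (by push_cast; linarith)
  rw [this, Finset.sum_range_succ, Finset.sum_range_succ]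
  have hlast : (min 1 (max 0 (s - (m + 1 : ℕ)))) • (u (m + 1 + 1) - u (m + 1)) = 0 := by
    have : s - ((m + 1 : ℕ) : ℝ) ≤ 0 := by push_cast; linarith
    rw [max_eq_left this, min_eq_right zero_le_one, zero_smul]
  have hm : (min 1 (max 0 (s - (m : ℕ)))) • (u (m + 1) - u m) = (s - m) • (u (m + 1) - u m) := by
    rw [max_eq_right (by linarith), min_eq_right (by linarith)]
  have h3 : ∑ j ∈ Finset.range m, (min 1 (max 0 (s - j))) • (u (j + 1) - u j)
      = ∑ j ∈ Finset.range m, (u (j + 1) - u j) := by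
    refine Finset.sum_congr rfl fun j hj => ?_
    rw [Finset.mem_range] at hj
    have : (1 : ℝ) ≤ s - j := by
      have : (j : ℝ) + 1 ≤ m := by exact_mod_cast hj
      linarith
    rw [max_eq_right (by linarith), min_eq_left this, one_smul]
  rw [hlast, hm, h3, add_zero, Finset.sum_range_sub]
  abel

lemma dist_seqPath_le (u : ℕ → E) (t : E) {s : ℝ} (hs : 0 ≤ s) :
    dist (seqPath u s) t ≤ max (dist (u ⌊s⌋₊) t) (dist (u (⌊s⌋₊ + 1)) t) := by
  set m := ⌊s⌋₊
  have h1 : (m : ℝ) ≤ s := Nat.floor_le hs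
  have h2 : s ≤ (m : ℝ) + 1 := le_of_lt (Nat.lt_floor_add_one s)
  set θ : ℝ := s - m with hθ
  have hθ0 : 0 ≤ θ := by simp [hθ]; linarith
  have hθ1 : θ ≤ 1 := by simp [hθ]; linarith
  rw [seqPath_formula u m h1 h2]
  have hrw : u m + θ • (u (m + 1) - u m) - t = (1 - θ) • (u m - t) + θ • (u (m + 1) - t) := by
    module
  rw [dist_eq_norm, hrw]
  calc ‖(1 - θ) • (u m - t) + θ • (u (m + 1) - t)‖
      ≤ ‖(1 - θ) • (u m - t)‖ + ‖θ • (u (m + 1) - t)‖ := norm_add_le _ _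
    _ = (1 - θ) * ‖u m - t‖ + θ * ‖u (m + 1) - t‖ := by
        rw [norm_smul, norm_smul, Real.norm_eq_abs, Real.norm_eq_abs,
          abs_of_nonneg (by linarith), abs_of_nonneg hθ0]
    _ ≤ (1 - θ) * max (dist (u m) t) (dist (u (m + 1)) t)
        + θ * max (dist (u m) t) (dist (u (m + 1)) t) := by
        rw [← dist_eq_norm, ← dist_eq_norm]
        gcongr
        · exact le_max_left (dist (u m) t) (dist (u (m+1)) t)
        · exact le_max_right (dist (u m) t) (dist (u (m+1)) t)
    _ = max (dist (u m) t) (dist (u (m + 1)) t) := by ring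


/-- The path `γ` through a convergent sequence. -/
def gammaFun (u : ℕ → E) (t : E) : unitInterval → E :=
  fun r => if (r : ℝ) < 1 then seqPath u ((r : ℝ) / (1 - (r : ℝ))) else t

lemma gammaFun_one (u : ℕ → E) (t : E) : gammaFun u t 1 = t := by
  simp [gammaFun]

def tau (k : ℕ) : unitInterval :=
  ⟨(k : ℝ) / (k + 1), by
    constructor
    · positivity
    · rw [div_le_one (by positivity)]; linarith⟩

lemma tau_lt_one (k : ℕ) : ((tau k : ℝ)) < 1 := by
  rw [tau]; exact (div_lt_one (by positivity)).2 (by linarith)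

lemma gammaFun_tau (u : ℕ → E) (t : E) (k : ℕ) : gammaFun u t (tau k) = u k := by
  rw [gammaFun, if_pos (tau_lt_one k)]
  have h1 : (1 : ℝ) - (tau k : ℝ) = 1 / (k + 1) := by
    rw [tau]; field_simp; ring
  have h2 : ((tau k : ℝ)) / (1 - (tau k : ℝ)) = (k : ℝ) := by
    rw [h1, tau]; field_simp
  rw [h2, seqPath_nat]

lemma tendsto_tau : Tendsto tau atTop (𝓝 (1 : unitInterval)) := by
  rw [tendsto_subtype_rng]
  have h := tendsto_one_div_add_atTop_nhds_zero_nat (𝕜 := ℝ)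
  have h2 : Tendsto (fun n : ℕ => 1 - 1 / ((n : ℝ) + 1)) atTop (𝓝 (1 - 0)) :=
    tendsto_const_nhds.sub h
  rw [sub_zero] at h2
  refine h2.congr fun k => ?_
  rw [tau]
  field_simp
  ring

lemma continuous_gammaFun (u : ℕ → E) (t : E) (hu : Tendsto u atTop (𝓝 t)) :
    Continuous (gammaFun u t) := by
  rw [continuous_iff_continuousAt]
  intro r₀
  by_cases h : (r₀ : ℝ) < 1
  · have hopen : IsOpen {r : unitInterval | (r : ℝ) < 1} :=
      isOpen_Iio.preimage continuous_subtype_val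
    have hca : ContinuousAt (fun r : unitInterval => seqPath u ((r : ℝ) / (1 - (r : ℝ)))) r₀ := by
      refine (continuous_seqPath u).continuousAt.comp ?_
      exact ContinuousAt.div continuous_subtype_val.continuousAt
        (continuous_const.sub continuous_subtype_val).continuousAt
        (sub_ne_zero.2 (ne_of_gt h))
    refine hca.congr ?_
    filter_upwards [hopen.mem_nhds h] with r hr
    exact (if_pos hr).symm
  · have hr1 : (r₀ : ℝ) = 1 := le_antisymm r₀.2.2 (not_lt.1 h)
    rw [Metric.continuousAt_iff]
    intro ε hε
    obtain ⟨K, hK⟩ := (Metric.tendsto_atTop.1 hu) ε hε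
    refine ⟨1 / (K + 1), by positivity, ?_⟩
    intro r hrδ
    have hγr₀ : gammaFun u t r₀ = t := by
      rw [gammaFun, if_neg (by rw [hr1]; exact lt_irrefl 1)]
    rw [hγr₀]
    rcases lt_or_eq_of_le r.2.2 with hr | hr
    · rw [gammaFun, if_pos hr]
      have hd : |(r : ℝ) - 1| < 1 / (K + 1) := by
        rw [Subtype.dist_eq, Real.dist_eq, hr1] at hrδ; exact hrδ
      have h1r : 0 < 1 - (r : ℝ) := by linarith
      have hlow : 1 - (r : ℝ) < 1 / (K + 1) := by
        rw [abs_lt] at hd; linarith [hd.1]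
      have hrK : (K : ℝ) / (K + 1) < r := by
        have : 1 - 1 / ((K : ℝ) + 1) < r := by linarith
        have heq : 1 - 1 / ((K : ℝ) + 1) = (K : ℝ) / (K + 1) := by field_simp; ring
        linarith [heq ▸ this]
      have hs : (K : ℝ) < (r : ℝ) / (1 - (r : ℝ)) := by
        rw [lt_div_iff₀ h1r]
        nlinarith [hrK, h1r, (div_lt_iff₀ (show (0:ℝ) < (K:ℝ)+1 by positivity)).1 hrK]
      have hs0 : 0 ≤ (r : ℝ) / (1 - (r : ℝ)) := div_nonneg r.2.1 (le_of_lt h1r)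
      have hfl : K ≤ ⌊(r : ℝ) / (1 - (r : ℝ))⌋₊ := Nat.le_floor (le_of_lt hs)
      calc dist (seqPath u ((r : ℝ) / (1 - (r : ℝ)))) t
          ≤ max (dist (u ⌊(r : ℝ) / (1 - (r : ℝ))⌋₊) t)
            (dist (u (⌊(r : ℝ) / (1 - (r : ℝ))⌋₊ + 1)) t) := dist_seqPath_le u t hs0
        _ < ε := max_lt (hK _ hfl) (hK _ (le_trans hfl (Nat.le_succ _)))
    · rw [gammaFun, if_neg (by rw [hr]; exact lt_irrefl 1), dist_self]
      exact hε

lemma exists_path_through (u : ℕ → E) (t : E) (hu : Tendsto u atTop (𝓝 t)) :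
    ∃ γ : C(unitInterval, E), ∃ τ : ℕ → unitInterval,
      γ 1 = t ∧ (∀ k, γ (τ k) = u k) ∧ Tendsto τ atTop (𝓝 1) :=
  ⟨⟨gammaFun u t, continuous_gammaFun u t hu⟩, tau, gammaFun_one u t,
    gammaFun_tau u t, tendsto_tau⟩

/-- In a delta-generated space, closedness can be tested by paths from the unit interval. -/
lemma isClosed_of_paths {X : Type*} [TopologicalSpace X] [DeltaGeneratedSpace X] {W : Set X}
    (h : ∀ γ : C(unitInterval, X), IsClosed (γ ⁻¹' W)) : IsClosed W := by
  rw [← isOpen_compl_iff, DeltaGeneratedSpace.isOpen_iff (fun n ↦ Fin n → ℝ)]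
  intro n p
  rw [Set.preimage_compl, isOpen_compl_iff]
  refine IsSeqClosed.isClosed ?_
  intro u t hu hut
  obtain ⟨γ, τ, hγ1, hγτ, hτ⟩ := exists_path_through u t hut
  have hc := h (p.comp γ)
  have hmem : ∀ k, τ k ∈ (p.comp γ) ⁻¹' W := by
    intro k
    simp only [Set.mem_preimage, ContinuousMap.comp_apply, hγτ k]
    exact hu k
  have h1 : (1 : unitInterval) ∈ (p.comp γ) ⁻¹' W :=
    hc.mem_of_tendsto hτ (Filter.Eventually.of_forall hmem)
  simpa [hγ1] using h1

lemma Icc_nbhd {O : Set unitInterval} (hO : IsOpen O) {s : unitInterval} (hs : s ∈ O) :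
    ∃ c d : unitInterval, c ≤ d ∧ Set.Icc c d ⊆ O ∧ Set.Icc c d ∈ 𝓝 s := by
  obtain ⟨ε, hε, hball⟩ := Metric.isOpen_iff.1 hO s hs
  have hs0 : (0 : ℝ) ≤ (s : ℝ) := s.2.1
  have hs1 : (s : ℝ) ≤ 1 := s.2.2
  refine ⟨⟨max 0 ((s : ℝ) - ε / 2), le_max_left _ _, max_le zero_le_one (by linarith)⟩,
    ⟨min 1 ((s : ℝ) + ε / 2), le_min zero_le_one (by linarith), min_le_left _ _⟩, ?_, ?_, ?_⟩
  · show max 0 ((s : ℝ) - ε / 2) ≤ min 1 ((s : ℝ) + ε / 2)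
    refine max_le (le_min zero_le_one (by linarith)) (le_min (by linarith) (by linarith))
  · intro r hr
    apply hball
    have h1 : max 0 ((s : ℝ) - ε / 2) ≤ (r : ℝ) := hr.1
    have h2 : (r : ℝ) ≤ min 1 ((s : ℝ) + ε / 2) := hr.2
    have := le_trans (le_max_right 0 ((s : ℝ) - ε / 2)) h1
    have := le_trans h2 (min_le_right 1 ((s : ℝ) + ε / 2))
    rw [Metric.mem_ball, Subtype.dist_eq, Real.dist_eq, abs_lt]
    constructor <;> linarith
  · refine mem_of_superset (Metric.ball_mem_nhds s (half_pos hε)) ?_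
    intro r hr
    rw [Metric.mem_ball, Subtype.dist_eq, Real.dist_eq, abs_lt] at hr
    exact ⟨max_le r.2.1 (by linarith [hr.1]), le_min r.2.2 (by linarith [hr.2])⟩

lemma exists_clamp (c d : unitInterval) (hcd : c ≤ d) :
    ∃ φ : C(unitInterval, unitInterval),
      (∀ r, φ r ∈ Set.Icc c d) ∧ ∀ r ∈ Set.Icc c d, φ r = r := by
  have hc1 : (c : ℝ) ≤ 1 := c.2.2
  have hd0 : (0 : ℝ) ≤ (d : ℝ) := d.2.1
  refine ⟨⟨fun r => ⟨min (d : ℝ) (max (c : ℝ) (r : ℝ)),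
      le_min hd0 (le_trans c.2.1 (le_max_left _ _)), le_trans (min_le_left _ _) d.2.2⟩, ?_⟩,
        ?_, ?_⟩
  · exact Continuous.subtype_mk
      (continuous_const.min (continuous_const.max continuous_subtype_val)) _
  · intro r
    constructor
    · show (c : ℝ) ≤ min (d : ℝ) (max (c : ℝ) (r : ℝ))
      exact le_min hcd (le_max_left _ _)
    · show min (d : ℝ) (max (c : ℝ) (r : ℝ)) ≤ (d : ℝ)
      exact min_le_left _ _
  · intro r hr
    have h1 : (c : ℝ) ≤ (r : ℝ) := hr.1
    have h2 : (r : ℝ) ≤ (d : ℝ) := hr.2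
    exact Subtype.ext (by simp [max_eq_right h1, min_eq_right h2])


end DHQaux

open DHQaux



/-- The equivalence relation on `X` identifying all points of `A` with each other
and identifying no other distinct points. -/
def collapseSetoid {X : Type*} (A : Set X) : Setoid X where
  r x y := x = y ∨ (x ∈ A ∧ y ∈ A)
  iseqv := by
    constructor
    · intro x; exact Or.inl rfl
    · rintro x y (rfl | ⟨hx, hy⟩)
      · exact Or.inl rfl
      · exact Or.inr ⟨hy, hx⟩
    · rintro x y z (rfl | ⟨hx, hy⟩) (rfl | ⟨hy', hz⟩)
      · exact Or.inl rfl
      · exact Or.inr ⟨hy', hz⟩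
      · exact Or.inr ⟨hx, hy⟩
      · exact Or.inr ⟨hx, hz⟩

/-- If `X` is a Δ-generated Δ-Hausdorff space and `A ⊆ X` is closed, then the quotient
`X/A` collapsing `A` to a point, with the quotient topology, is Δ-Hausdorff. -/
theorem deltaHausdorff_quotient_closed
    {X : Type*} [TopologicalSpace X] [DeltaGeneratedSpace X]
    (hX : DeltaHausdorff X) (A : Set X) (hA : IsClosed A) :
    DeltaHausdorff (Quotient (collapseSetoid A)) := by
  intro f
  set q : X → Quotient (collapseSetoid A) := Quotient.mk (collapseSetoid A) with hqdef
  have hqm : IsQuotientMap q := @isQuotientMap_quotient_mk' X _ (collapseSetoid A)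
  have hrel : ∀ {x y : X}, q x = q y → x = y ∨ (x ∈ A ∧ y ∈ A) := fun h => Quotient.exact h
  set fl : unitInterval → X := fun r => (f r).out with hfldef
  have hfl : ∀ r, q (fl r) = f r := fun r => Quotient.out_eq _
  have hinj : ∀ {x y : X}, q x = q y → x ∉ A → x = y := by
    intro x y h hx
    rcases hrel h with h' | h'
    · exact h'
    · exact absurd h'.1 hx
  -- continuity of the lift at points mapping outside A
  have hcont : ∀ r, fl r ∉ A → ContinuousAt fl r := by
    intro r hr
    refine Filter.tendsto_def.2 fun V hV => ?_
    obtain ⟨U, hUV, hUopen, hxU⟩ := mem_nhds_iff.1 hV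
    have hsat : q ⁻¹' (q '' (U ∩ Aᶜ)) = U ∩ Aᶜ := by
      ext x
      constructor
      · rintro ⟨w, hw, hqw⟩
        rcases hrel hqw with h' | h'
        · exact h' ▸ hw
        · exact absurd h'.1 hw.2
      · intro hx; exact ⟨x, hx, rfl⟩
    have hopen : IsOpen (q '' (U ∩ Aᶜ)) :=
      hqm.isOpen_preimage.1 (by rw [hsat]; exact hUopen.inter hA.isOpen_compl)
    have hmemf : f r ∈ q '' (U ∩ Aᶜ) := ⟨fl r, ⟨hxU, hr⟩, hfl r⟩
    have hnb : f ⁻¹' (q '' (U ∩ Aᶜ)) ∈ 𝓝 r :=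
      f.continuous.continuousAt.preimage_mem_nhds (hopen.mem_nhds hmemf)
    refine mem_of_superset hnb ?_
    intro r' hr'
    obtain ⟨w, hw, hqw⟩ := hr'
    rcases hrel ((hfl r').trans hqw.symm) with h' | h'
    · exact hUV (h' ▸ hw.1)
    · exact absurd h'.2 hw.2
  rw [← hqm.isClosed_preimage]
  by_cases hS : ∃ r₀, fl r₀ ∈ A
  case neg =>
    push_neg at hS
    have hWeq : q ⁻¹' (Set.range f) = Set.range fl := by
      ext x
      simp only [Set.mem_preimage, Set.mem_range]
      constructor
      · rintro ⟨r, hr⟩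
        exact ⟨r, hinj ((hfl r).trans hr) (hS r)⟩
      · rintro ⟨r, rfl⟩
        exact ⟨r, (hfl r).symm⟩
    rw [hWeq]
    have hflc : Continuous fl := continuous_iff_continuousAt.2 fun r => hcont r (hS r)
    exact hX ⟨fl, hflc⟩
  case pos =>
    obtain ⟨r₀, hr₀⟩ := hS
    apply isClosed_of_paths
    intro P
    refine IsSeqClosed.isClosed ?_
    intro v t hv hvt
    have hv' : ∀ n, ∃ r, f r = q (P (v n)) := fun n => hv n
    choose σ hσ using hv'
    obtain ⟨s, -, ψ, hψ, hψt⟩ := isCompact_univ.tendsto_subseq (x := σ) fun n => Set.mem_univ _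
    set v' : ℕ → unitInterval := v ∘ ψ with hv'def
    set σ' : ℕ → unitInterval := σ ∘ ψ with hσ'def
    have hv't : Tendsto v' atTop (𝓝 t) := hvt.comp hψ.tendsto_atTop
    have hσ'eq : ∀ n, f (σ' n) = q (P (v' n)) := fun n => hσ (ψ n)
    show q (P t) ∈ Set.range f
    by_cases hpt : P t ∈ A
    · refine ⟨r₀, ?_⟩
      rw [← hfl r₀]
      exact Quotient.sound (Or.inr ⟨hr₀, hpt⟩)
    · set O : Set unitInterval := {r | fl r ∉ A} with hOdef
      have hOopen : IsOpen O := by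
        rw [isOpen_iff_mem_nhds]
        intro r hr
        exact (hcont r hr).preimage_mem_nhds (hA.isOpen_compl.mem_nhds hr)
      by_cases hfs : fl s ∈ A
      · -- contradiction branch
        exfalso
        have hOT : IsOpen (P ⁻¹' Aᶜ) := hA.isOpen_compl.preimage P.continuous
        obtain ⟨c, d, hcd, hsub, hmem⟩ := Icc_nbhd hOT hpt
        obtain ⟨φ, hφmem, hφfix⟩ := exists_clamp c d hcd
        have hC : IsClosed (Set.range (P.comp φ)) := hX (P.comp φ)
        have hCA : ∀ y ∈ Set.range (P.comp φ), y ∉ A := by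
          rintro y ⟨r, rfl⟩
          exact hsub (hφmem r)
        have hqC : IsClosed (q '' Set.range (P.comp φ)) := by
          rw [← hqm.isClosed_preimage]
          have hsat : q ⁻¹' (q '' Set.range (P.comp φ)) = Set.range (P.comp φ) := by
            ext x
            constructor
            · rintro ⟨w, hw, hqw⟩
              rcases hrel hqw with h' | h'
              · exact h' ▸ hw
              · exact absurd h'.1 (hCA w hw)
            · intro hx; exact ⟨x, hx, rfl⟩
          rw [hsat]; exact hC
        have hev : ∀ᶠ n in atTop, f (σ' n) ∈ q '' Set.range (P.comp φ) := by
          filter_upwards [hv't hmem] with n hn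
          exact ⟨P (v' n), ⟨v' n, by rw [ContinuousMap.comp_apply, hφfix _ hn]⟩, (hσ'eq n).symm⟩
        have hlim : Tendsto (fun n => f (σ' n)) atTop (𝓝 (f s)) :=
          (f.continuous.tendsto s).comp hψt
        obtain ⟨w, hw, hqw⟩ := hqC.mem_of_tendsto hlim hev
        rcases hrel (hqw.trans (hfl s).symm) with h' | h'
        · exact hCA w hw (h' ▸ hfs)
        · exact hCA w hw h'.1
      · -- main branch
        have hsO : s ∈ O := hfs
        obtain ⟨c, d, hcd, hsub, hmem⟩ := Icc_nbhd hOopen hsO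
        obtain ⟨φ, hφmem, hφfix⟩ := exists_clamp c d hcd
        have hflO : ContinuousOn fl O := fun r hr => (hcont r hr).continuousWithinAt
        have hg : Continuous (fl ∘ φ) :=
          hflO.comp_continuous φ.continuous fun r => hsub (hφmem r)
        have hgC : IsClosed (Set.range (fl ∘ φ)) := hX ⟨fl ∘ φ, hg⟩
        have hev : ∀ᶠ n in atTop, P (v' n) ∈ Set.range (fl ∘ φ) := by
          filter_upwards [hψt hmem] with n hn
          refine ⟨σ' n, ?_⟩
          have h1 : fl (σ' n) ∉ A := hsub hn
          have h2 : q (fl (σ' n)) = q (P (v' n)) := by rw [hfl, hσ'eq n]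
          rw [Function.comp_apply, hφfix _ hn]
          exact hinj h2 h1
        have hlim : Tendsto (fun n => P (v' n)) atTop (𝓝 (P t)) :=
          (P.continuous.tendsto t).comp hv't
        obtain ⟨r, hr⟩ := hgC.mem_of_tendsto hlim hev
        exact ⟨φ r, by rw [← hfl (φ r)]; exact congrArg q hr⟩
end
end

section
/- Consider topological spaces X, Y, Z, W and continuous maps p : X → Z, f : X → Y, g : Z → W, q : Y → W with q ∘ f = g ∘ p. If f is a closed embedding, g is injective, p is surjective, q is either a closed map or a quotient map, and q⁻¹(g(Z)) ⊆ f(X), then g is a closed embedding. -/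
/-- Given a commutative square `q ∘ f = g ∘ p` of continuous maps in which `f` is a
closed embedding, `g` is injective, `p` is surjective, `q` is a closed map or a quotient
map, and `q⁻¹(g(Z)) ⊆ f(X)`, the map `g` is a closed embedding. -/
theorem isClosedEmbedding_of_square
    {X Y Z W : Type*} [TopologicalSpace X] [TopologicalSpace Y]
    [TopologicalSpace Z] [TopologicalSpace W]
    (p : X → Z) (f : X → Y) (g : Z → W) (q : Y → W)
    (hp : Continuous p) (hf : Continuous f) (hg : Continuous g) (hq : Continuous q)
    (hcomm : q ∘ f = g ∘ p)
    (hfc : Topology.IsClosedEmbedding f)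
    (hginj : Function.Injective g)
    (hpsurj : Function.Surjective p)
    (hqcq : IsClosedMap q ∨ Topology.IsQuotientMap q)
    (him : q ⁻¹' (Set.range g) ⊆ Set.range f) :
    Topology.IsClosedEmbedding g := by
  have hcomm' : ∀ x, q (f x) = g (p x) := fun x => congrFun hcomm x
  have key : ∀ C : Set Z, IsClosed C → g '' C = q '' (f '' (p ⁻¹' C)) := by
    intro C _
    ext w
    constructor
    · rintro ⟨c, hc, rfl⟩
      obtain ⟨x, rfl⟩ := hpsurj c
      exact ⟨f x, ⟨x, hc, rfl⟩, (hcomm' x)⟩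
    · rintro ⟨y, ⟨x, hx, rfl⟩, rfl⟩
      exact ⟨p x, hx, (hcomm' x).symm⟩
  have hgc : IsClosedMap g := by
    intro C hC
    have hclosed : IsClosed (f '' (p ⁻¹' C)) := hfc.isClosedMap _ (hC.preimage hp)
    rw [key C hC]
    rcases hqcq with hq' | hq'
    · exact hq' _ hclosed
    · rw [hq'.isClosed_preimage.symm]
      have : q ⁻¹' (q '' (f '' (p ⁻¹' C))) = f '' (p ⁻¹' C) := by
        apply Set.Subset.antisymm
        · rintro y hy
          obtain ⟨y', ⟨x, hx, rfl⟩, hqy⟩ := hy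
          have : q y ∈ Set.range g := ⟨p x, by rw [← hqy, hcomm' x]⟩
          obtain ⟨x', rfl⟩ := him this
          have : g (p x') = g (p x) := by rw [← hcomm', ← hcomm', hqy]
          refine ⟨x', ?_, rfl⟩
          show p x' ∈ C
          rw [hginj this]; exact hx
        · exact Set.subset_preimage_image q _
      rw [this]; exact hclosed
  exact Topology.IsClosedEmbedding.of_continuous_injective_isClosedMap hg hginj hgc
end

section
/- Let A, B, X be Δ-generated topological spaces, let f : A → B be a closed embedding, and let h : A → X be a continuous map. Form the pushout Y = B ⊔_A X in the category of topological spaces (so Y is the quotient of the disjoint union B ⊔ X with the final topology). Then the canonical map g : X → Y is a closed embedding. -/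
open CategoryTheory CategoryTheory.Limits


namespace PushoutAux

variable {A B X : TopCat.{0}} (f : A ⟶ B) (h : A ⟶ X)

instance : TopologicalSpace (Types.Pushout (TypeCat.ofHom (f : A → B)) (TypeCat.ofHom (h : A → X))) :=
  inferInstanceAs (TopologicalSpace (Quot _))

/-- The explicit pushout cocone in `TopCat`. -/
def cocone : PushoutCocone f h :=
  PushoutCocone.mk (W := TopCat.of (Types.Pushout (TypeCat.ofHom (f : A → B)) (TypeCat.ofHom (h : A → X))))
    (TopCat.ofHom ⟨Types.Pushout.inl _ _, by
      exact (isQuotientMap_quot_mk.continuous).comp continuous_inl⟩)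
    (TopCat.ofHom ⟨Types.Pushout.inr _ _, by
      exact (isQuotientMap_quot_mk.continuous).comp continuous_inr⟩)
    (by
      ext a
      exact Quot.sound (Types.Pushout.Rel.inl_inr a))

def isColimitCocone : IsColimit (cocone f h) := by
  refine PushoutCocone.IsColimit.mk _ (fun s =>
    TopCat.ofHom ⟨Quot.lift (Sum.elim s.inl s.inr) ?_, ?_⟩) (fun s => ?_) (fun s => ?_) (fun s m h₁ h₂ => ?_)
  · rintro _ _ ⟨a⟩
    exact ConcreteCategory.congr_hom s.condition a
  · exact continuous_quot_lift _ (continuous_sumElim.2 ⟨s.inl.hom.continuous, s.inr.hom.continuous⟩)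
  · ext b; rfl
  · ext x; rfl
  · ext z
    induction z using Quot.ind with
    | _ z =>
      obtain (b | x) := z
      · exact ConcreteCategory.congr_hom h₁ b
      · exact ConcreteCategory.congr_hom h₂ x

end PushoutAux

namespace PushoutAux
open Topology

theorem isClosedEmbedding_inr {A B X : TopCat.{0}} (f : A ⟶ B)
    (hf : Topology.IsClosedEmbedding f) (h : A ⟶ X) :
    Topology.IsClosedEmbedding ((cocone f h).inr) := by
  have : Mono (TypeCat.ofHom (f : A → B)) := (CategoryTheory.mono_iff_injective _).2 hf.injective
  have hinj : Function.Injective ((cocone f h).inr) := by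
    intro x y hxy
    have := (Types.Pushout.quot_mk_eq_iff (TypeCat.ofHom (f : A → B)) (TypeCat.ofHom (h : A → X)) (Sum.inr x) (Sum.inr y)).1 hxy
    rwa [Types.Pushout.inr_rel'_inr_iff] at this
  refine .of_continuous_injective_isClosedMap (cocone f h).inr.hom.continuous hinj ?_
  intro C hC
  change IsClosed (X := Quot (Types.Pushout.Rel (TypeCat.ofHom (f : A → B))
    (TypeCat.ofHom (h : A → X)))) ((cocone f h).inr '' C)
  rw [← isQuotientMap_quot_mk.isClosed_preimage, isClosed_sum_iff]
  constructor
  · have heq : Sum.inl ⁻¹' (Quot.mk _ ⁻¹' ((cocone f h).inr '' C)) = f '' (h ⁻¹' C) := by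
      ext b
      simp only [Set.mem_preimage, Set.mem_image]
      constructor
      · rintro ⟨c, hc, hcb⟩
        obtain ⟨a, ha1, ha2⟩ := (Types.Pushout.inl_eq_inr_iff (TypeCat.ofHom (f : A → B)) (TypeCat.ofHom (h : A → X)) b c).1
          hcb.symm
        exact ⟨a, ha2 ▸ hc, ha1⟩
      · rintro ⟨a, ha, rfl⟩
        exact ⟨h a, ha, ((Types.Pushout.inl_eq_inr_iff (TypeCat.ofHom (f : A → B)) (TypeCat.ofHom (h : A → X)) _ _).2
          ⟨a, rfl, rfl⟩).symm⟩
    rw [heq]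
    exact hf.isClosedMap _ (hC.preimage h.hom.continuous)
  · have heq : Sum.inr ⁻¹' (Quot.mk _ ⁻¹' ((cocone f h).inr '' C)) = C := by
      ext x
      simp only [Set.mem_preimage, Set.mem_image]
      constructor
      · rintro ⟨c, hc, hcx⟩
        exact hinj hcx ▸ hc
      · exact fun hx => ⟨x, hx, rfl⟩
    rw [heq]
    exact hC

end PushoutAux


/-- If `f : A → B` is a closed embedding of Δ-generated spaces and `h : A → X` is a
continuous map with `X` Δ-generated, then the canonical map `X → B ⊔_A X` into the
pushout (computed in the category of topological spaces) is a closed embedding. -/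
theorem isClosedEmbedding_pushout_inr
    {A B X : TopCat.{0}}
    [DeltaGeneratedSpace A] [DeltaGeneratedSpace B] [DeltaGeneratedSpace X]
    (f : A ⟶ B) (hf : Topology.IsClosedEmbedding f) (h : A ⟶ X) :
    Topology.IsClosedEmbedding (pushout.inr f h : X ⟶ pushout f h) := by
  let t : ColimitCocone (span f h) := ⟨PushoutAux.cocone f h, PushoutAux.isColimitCocone f h⟩
  let e : pushout f h ≅ (PushoutAux.cocone f h).pt := colimit.isoColimitCocone t
  have key : (pushout.inr f h) ≫ e.hom = (PushoutAux.cocone f h).inr := by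
    exact colimit.isoColimitCocone_ι_hom t WalkingSpan.right
  have hcomp : ⇑(pushout.inr f h) =
      ⇑(TopCat.homeoOfIso e.symm) ∘ ⇑((PushoutAux.cocone f h).inr) := by
    funext x
    have := ConcreteCategory.congr_hom key x
    simp only [TopCat.comp_app] at this
    simp [← this, TopCat.homeoOfIso]
  rw [hcomp]
  exact (TopCat.homeoOfIso e.symm).isClosedEmbedding.comp
    (PushoutAux.isClosedEmbedding_inr f hf h)
end

section
/- Let A, B, X be Δ-generated topological spaces, let f : A → B be a closed embedding, and let h : A → X be a continuous map. Form the pushout Y = B ⊔_A X in the category of topological spaces. If B and X are Δ-Hausdorff, then Y is Δ-Hausdorff. -/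
set_option linter.unusedSectionVars false
set_option maxHeartbeats 1000000

open CategoryTheory CategoryTheory.Limits

section DHProofSection

open Topology Filter Set

namespace DHProof

variable {Z : Type*} [TopologicalSpace Z]

lemma DH.singleton (hZ : DeltaHausdorff Z) (z : Z) : IsClosed ({z} : Set Z) := by
  have := hZ (ContinuousMap.const unitInterval z)
  have h2 : Set.range (Function.const unitInterval z) = {z} := by
    ext y; simp [Function.const, eq_comm]
  rwa [ContinuousMap.coe_const, h2] at this

lemma icc_closed (a b : unitInterval) : IsClosed (Set.Icc a b) := by
  have : Set.Icc a b =
      (Subtype.val : unitInterval → ℝ) ⁻¹' (Set.Icc (a : ℝ) (b : ℝ)) := by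
    ext t
    simp [Set.mem_Icc, Subtype.coe_le_coe]
  rw [this]
  exact isClosed_Icc.preimage continuous_subtype_val

lemma tendsto_I_of_dist {ρ : ℕ → unitInterval} {s : unitInterval} {g : ℕ → ℝ}
    (hg : Tendsto g atTop (𝓝 0)) (hb : ∀ n, dist (ρ n) s ≤ g n) :
    Tendsto ρ atTop (𝓝 s) :=
  tendsto_iff_dist_tendsto_zero.mpr (squeeze_zero (fun _ => dist_nonneg) hb hg)

lemma image_Icc_closed (hZ : DeltaHausdorff Z) (v : C(unitInterval, Z)) (a b : unitInterval) :
    IsClosed (v '' Set.Icc a b) := by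
  rcases le_or_gt a b with hab | hab
  swap
  · simp [Set.Icc_eq_empty_of_lt hab]
  have hab' : (a : ℝ) ≤ (b : ℝ) := hab
  have hsub : ∀ t : unitInterval, (a : ℝ) + t.1 * ((b : ℝ) - a) ∈ Set.Icc (0 : ℝ) 1 := by
    intro t
    constructor
    · nlinarith [a.2.1, t.2.1]
    · nlinarith [b.2.2, t.2.1, t.2.2]
  set σ : unitInterval → unitInterval := fun t => ⟨(a : ℝ) + t.1 * ((b : ℝ) - a), hsub t⟩ with hσ
  have hσc : Continuous σ := by
    apply Continuous.subtype_mk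
    fun_prop
  have hrange : Set.range σ = Set.Icc a b := by
    apply Set.Subset.antisymm
    · rintro _ ⟨t, rfl⟩
      constructor
      · rw [← Subtype.coe_le_coe]
        simp only [hσ]
        nlinarith [t.2.1]
      · rw [← Subtype.coe_le_coe]
        simp only [hσ]
        nlinarith [t.2.2]
    · rintro c ⟨hac, hcb⟩
      have hac' : (a : ℝ) ≤ c := hac
      have hcb' : (c : ℝ) ≤ b := hcb
      by_cases hba : (b : ℝ) - a = 0
      · refine ⟨0, ?_⟩
        apply Subtype.ext
        simp only [hσ]
        have : (c : ℝ) = a := le_antisymm (by linarith) hac'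
        simp [this.symm]
      · have hba' : (0 : ℝ) < (b : ℝ) - a := lt_of_le_of_ne (by linarith) (Ne.symm hba)
        have ht0 : (0 : ℝ) ≤ ((c : ℝ) - a) / ((b : ℝ) - a) := div_nonneg (by linarith) hba'.le
        have ht1 : ((c : ℝ) - a) / ((b : ℝ) - a) ≤ 1 := by
          rw [div_le_one hba']; linarith
        refine ⟨⟨_, ht0, ht1⟩, ?_⟩
        apply Subtype.ext
        simp only [hσ]
        field_simp
        ring
  have : v '' Set.Icc a b = Set.range (v.comp ⟨σ, hσc⟩) := by
    rw [← hrange, ContinuousMap.coe_comp, Set.range_comp]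
    rfl
  rw [this]
  exact hZ _

lemma exists_shrinking (s : unitInterval) : ∃ a b : ℕ → unitInterval,
    (∀ n, Set.Icc (a n) (b n) ∈ 𝓝 s) ∧
    ∀ ρ : ℕ → unitInterval, (∀ n, ρ n ∈ Set.Icc (a n) (b n)) → Tendsto ρ atTop (𝓝 s) := by
  have hapf : ∀ n : ℕ, max 0 (s.1 - 1/(n+1)) ∈ Set.Icc (0:ℝ) 1 := by
    intro n
    constructor
    · exact le_max_left _ _
    · apply max_le zero_le_one
      have := s.2.2
      have : (0:ℝ) < 1/(n+1) := by positivity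
      linarith [s.2.2]
  have hbpf : ∀ n : ℕ, min 1 (s.1 + 1/(n+1)) ∈ Set.Icc (0:ℝ) 1 := by
    intro n
    constructor
    · apply le_min zero_le_one
      have : (0:ℝ) < 1/(n+1) := by positivity
      linarith [s.2.1]
    · exact min_le_left _ _
  refine ⟨fun n => ⟨_, hapf n⟩, fun n => ⟨_, hbpf n⟩, fun n => ?_, fun ρ hρ => ?_⟩
  · have hUopen : IsOpen {t : unitInterval | |t.1 - s.1| < 1/(n+1)} := by
      have : Continuous fun t : unitInterval => |t.1 - s.1| := by fun_prop
      exact isOpen_Iio.preimage this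
    refine Filter.mem_of_superset (hUopen.mem_nhds ?_) ?_
    · simp only [Set.mem_setOf_eq, sub_self, abs_zero]
      positivity
    · intro t ht
      simp only [Set.mem_setOf_eq] at ht
      rw [abs_lt] at ht
      constructor
      · rw [← Subtype.coe_le_coe]
        exact max_le t.2.1 (by linarith [ht.1])
      · rw [← Subtype.coe_le_coe]
        exact le_min t.2.2 (by linarith [ht.2])
  · apply tendsto_I_of_dist (g := fun n => 1/(n+1)) tendsto_one_div_add_atTop_nhds_zero_nat
    intro n
    rcases hρ n with ⟨h1, h2⟩
    have h1' : max 0 (s.1 - 1/(n+1)) ≤ (ρ n).1 := h1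
    have h2' : (ρ n).1 ≤ min 1 (s.1 + 1/(n+1)) := h2
    rw [Subtype.dist_eq, Real.dist_eq, abs_le]
    constructor
    · have := le_trans (le_max_right 0 (s.1 - 1/(n+1))) h1'
      linarith
    · have := le_trans h2' (min_le_right 1 (s.1 + 1/(n+1)))
      linarith

lemma intervalTL (hZ : DeltaHausdorff Z) (w : C(unitInterval, Z)) {l : Filter ℕ} [l.NeBot]
    (hl : l ≤ atTop) {ρ : ℕ → unitInterval} {ρ₀ : unitInterval}
    (hρ : Tendsto ρ atTop (𝓝 ρ₀)) {ξ : Z}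
    (hval : Tendsto (fun j => w (ρ j)) l (𝓝 ξ)) : ξ = w ρ₀ := by
  obtain ⟨a, b, hnhds, hconv⟩ := exists_shrinking ρ₀
  have hmem : ∀ n, ξ ∈ w '' Set.Icc (a n) (b n) := by
    intro n
    refine (image_Icc_closed hZ w (a n) (b n)).mem_of_tendsto hval ?_
    have h1 : ∀ᶠ j in atTop, ρ j ∈ Set.Icc (a n) (b n) := hρ.eventually_mem (hnhds n)
    exact (h1.filter_mono hl).mono fun j hj => ⟨ρ j, hj, rfl⟩
  choose ρ' hρ'mem hρ'eq using hmem
  have h1 : Tendsto (fun n => w (ρ' n)) atTop (𝓝 (w ρ₀)) :=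
    (w.continuous.tendsto ρ₀).comp (hconv ρ' hρ'mem)
  have h2 : Tendsto (fun _ : ℕ => ξ) atTop (𝓝 (w ρ₀)) := by
    rwa [tendsto_congr hρ'eq] at h1
  have : w ρ₀ ∈ closure ({ξ} : Set Z) :=
    mem_closure_of_tendsto h2 (Eventually.of_forall fun _ => rfl)
  rw [(DH.singleton hZ ξ).closure_eq] at this
  exact (Set.mem_singleton_iff.mp this).symm

section PL

variable {E : Type*} [NormedAddCommGroup E] [NormedSpace ℝ E]

/-- Piecewise-linear interpolation through the points `t n` at parameters `n`. -/
noncomputable def interp (t : ℕ → E) : ℝ → E :=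
  fun r => t ⌊r⌋₊ + (r - ⌊r⌋₊) • (t (⌊r⌋₊ + 1) - t ⌊r⌋₊)

/-- The affine piece. -/
noncomputable def affpiece (t : ℕ → E) (n : ℕ) : ℝ → E :=
  fun r => t n + (r - n) • (t (n + 1) - t n)

lemma continuous_affpiece (t : ℕ → E) (n : ℕ) : Continuous (affpiece t n) := by
  unfold affpiece; fun_prop

lemma interp_natCast (t : ℕ → E) (n : ℕ) : interp t (n : ℝ) = t n := by
  simp [interp, Nat.floor_natCast]

lemma interp_eq_affpiece_of_lt (t : ℕ → E) {n : ℕ} {r : ℝ} (h1 : (n : ℝ) ≤ r)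
    (h2 : r < n + 1) : interp t r = affpiece t n r := by
  have h0 : (0 : ℝ) ≤ r := le_trans (by positivity) h1
  have hfl : ⌊r⌋₊ = n := by
    rw [Nat.floor_eq_iff h0]
    exact ⟨h1, by exact_mod_cast h2⟩
  rw [interp, hfl, affpiece]

lemma interp_succ_eq_affpiece (t : ℕ → E) (n : ℕ) :
    interp t ((n : ℝ) + 1) = affpiece t n ((n : ℝ) + 1) := by
  have h1 : ((n : ℝ) + 1) = ((n + 1 : ℕ) : ℝ) := by push_cast; ring
  rw [h1, interp_natCast, affpiece]
  have : ((n+1:ℕ):ℝ) - (n:ℝ) = 1 := by push_cast; ring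
  rw [this, one_smul]
  abel

lemma interp_eq_affpiece_on_Icc (t : ℕ → E) {n : ℕ} {r : ℝ} (h1 : (n : ℝ) ≤ r)
    (h2 : r ≤ n + 1) : interp t r = affpiece t n r := by
  rcases lt_or_eq_of_le h2 with h2' | h2'
  · exact interp_eq_affpiece_of_lt t h1 h2'
  · rw [h2', interp_succ_eq_affpiece]

lemma continuousAt_interp (t : ℕ → E) (r₀ : ℝ) : ContinuousAt (interp t) r₀ := by
  rcases lt_or_ge r₀ 1 with hr | hr
  · -- on `Iio 1`, `interp` agrees with `affpiece t 0`
    refine ((continuous_affpiece t 0).continuousAt).congr ?_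
    refine Filter.eventuallyEq_of_mem (isOpen_Iio.mem_nhds hr) fun r hrm => ?_
    have : ⌊r⌋₊ = 0 := Nat.floor_eq_zero.mpr hrm
    simp [interp, affpiece, this]
  · obtain ⟨n, hn⟩ : ∃ n, ⌊r₀⌋₊ = n := ⟨_, rfl⟩
    have hn1 : 1 ≤ n := hn ▸ Nat.le_floor (by exact_mod_cast hr)
    have hfl : (n : ℝ) ≤ r₀ := hn ▸ Nat.floor_le (by linarith)
    have hfu : r₀ < (n:ℝ) + 1 := by rw [← hn]; exact_mod_cast Nat.lt_floor_add_one r₀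
    rcases eq_or_lt_of_le hfl with heq | hlt
    · -- integer point
      rw [continuousAt_iff_continuous_left_right]
      constructor
      · -- left: agrees with affpiece (n-1) on (n-1, r₀]
        obtain ⟨m, rfl⟩ : ∃ m, n = m + 1 := ⟨n - 1, (Nat.succ_pred_eq_of_pos hn1).symm⟩
        have hm1 : (m : ℝ) < r₀ := by rw [← heq]; push_cast; linarith
        have hm2 : r₀ ≤ (m : ℝ) + 1 := by rw [← heq]; push_cast; linarith
        rw [← continuousWithinAt_inter (t := Set.Ioi (m : ℝ))
            (isOpen_Ioi.mem_nhds (Set.mem_Ioi.mpr hm1))]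
        refine ((continuous_affpiece t m).continuousWithinAt).congr ?_ ?_
        · intro r ⟨hr1, hr2⟩
          have hr1' : r ≤ r₀ := hr1
          have hr2' : (m : ℝ) < r := hr2
          exact interp_eq_affpiece_on_Icc t (le_of_lt hr2') (by linarith)
        · exact interp_eq_affpiece_on_Icc t (le_of_lt hm1) hm2
      · -- right: agrees with affpiece n on [r₀, n+1)
        rw [← continuousWithinAt_inter (t := Set.Iio ((n : ℝ) + 1))
            (isOpen_Iio.mem_nhds hfu)]
        refine ((continuous_affpiece t n).continuousWithinAt).congr ?_ ?_
        · intro r ⟨hr1, hr2⟩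
          have hr1' : r₀ ≤ r := hr1
          have hr2' : r < (n : ℝ) + 1 := hr2
          exact interp_eq_affpiece_on_Icc t (by rw [heq]; exact hr1') (le_of_lt hr2')
        · exact interp_eq_affpiece_on_Icc t hfl (le_of_lt hfu)
    · -- non-integer point: `Ioo n (n+1)` is an open neighbourhood
      refine ((continuous_affpiece t n).continuousAt).congr ?_
      refine Filter.eventuallyEq_of_mem (isOpen_Ioo.mem_nhds ⟨hlt, hfu⟩) fun r hrm => ?_
      exact (interp_eq_affpiece_on_Icc t (le_of_lt hrm.1) (le_of_lt hrm.2)).symm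

/-- Piecewise-linear path through a convergent sequence: at `1/(j+1)` it equals `t j`,
at `0` it equals the limit. -/
noncomputable def plPath (t : ℕ → E) (tlim : E) : unitInterval → E :=
  fun s => if s.1 ≤ 0 then tlim else interp t (1 / s.1 - 1)

lemma plPath_zero (t : ℕ → E) (tlim : E) : plPath t tlim 0 = tlim := by
  simp [plPath]

lemma oneDivNat_mem (j : ℕ) : (1:ℝ)/(j+1) ∈ Set.Icc (0:ℝ) 1 := by
  constructor
  · positivity
  · rw [div_le_one (by positivity)]
    have : (0:ℝ) ≤ j := Nat.cast_nonneg j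
    linarith

lemma plPath_node (t : ℕ → E) (tlim : E) (j : ℕ) :
    plPath t tlim ⟨1/(j+1), oneDivNat_mem j⟩ = t j := by
  have hpos : (0:ℝ) < 1/((j:ℝ)+1) := by positivity
  rw [plPath]
  simp only
  rw [if_neg (not_le.mpr hpos)]
  have harith : 1 / ((1:ℝ) / ((j:ℝ)+1)) - 1 = (j:ℝ) := by
    rw [one_div_one_div]; ring
  rw [harith, interp_natCast]

lemma continuous_plPath {t : ℕ → E} {tlim : E} (ht : Tendsto t atTop (𝓝 tlim)) :
    Continuous (plPath t tlim) := by
  rw [continuous_iff_continuousAt]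
  intro s₀
  rcases eq_or_lt_of_le s₀.2.1 with h0 | hpos
  · -- s₀ = 0
    have hs₀ : s₀ = 0 := Subtype.ext h0.symm
    subst hs₀
    have key : Tendsto (fun r : ℝ => if r ≤ 0 then tlim else interp t (1/r - 1))
        (𝓝[Set.Ici (0:ℝ)] 0) (𝓝 tlim) := by
      rw [Metric.tendsto_nhdsWithin_nhds]
      intro ε hε
      obtain ⟨N, hN⟩ := (Metric.tendsto_atTop.mp ht) (ε/2) (by positivity)
      refine ⟨1/(N+1), by positivity, ?_⟩
      intro x _ hx
      by_cases hx0 : x ≤ 0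
      · rw [if_pos hx0]; simpa using hε
      · rw [if_neg hx0]
        push_neg at hx0
        rw [Real.dist_eq] at hx
        have hxlt : x < 1/((N:ℝ)+1) := by
          have : |x - 0| = x := by rw [sub_zero, abs_of_pos hx0]
          linarith [this ▸ hx]
        have hinv : (N:ℝ) + 1 < 1 / x := by
          rw [lt_div_iff₀ hx0]
          calc ((N:ℝ)+1) * x < ((N:ℝ)+1) * (1/((N:ℝ)+1)) := by
                apply mul_lt_mul_of_pos_left hxlt (by positivity)
            _ = 1 := by field_simp
        set r := 1/x - 1 with hr
        have hrN : (N:ℝ) ≤ r := by rw [hr]; linarith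
        have hr0 : (0:ℝ) ≤ r := le_trans (Nat.cast_nonneg N) hrN
        set n := ⌊r⌋₊ with hn
        have hnN : N ≤ n := Nat.le_floor hrN
        have hθ0 : (0:ℝ) ≤ r - n := by
          have := Nat.floor_le hr0; linarith
        have hθ1 : r - n < 1 := by
          have := Nat.lt_floor_add_one r; linarith
        have hd1 : dist (t n) tlim < ε/2 := hN n hnN
        have hd2 : dist (t (n+1)) tlim < ε/2 := hN (n+1) (by omega)
        rw [dist_eq_norm] at hd1 hd2 ⊢
        have hdecomp : interp t r - tlim =
            (1 - (r - n)) • (t n - tlim) + (r - n) • (t (n+1) - tlim) := by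
          rw [interp, ← hn]
          module
        rw [hdecomp]
        calc ‖(1 - (r - n)) • (t n - tlim) + (r - n) • (t (n+1) - tlim)‖
            ≤ ‖(1 - (r - n)) • (t n - tlim)‖ + ‖(r - n) • (t (n+1) - tlim)‖ := norm_add_le _ _
          _ = (1 - (r - n)) * ‖t n - tlim‖ + (r - n) * ‖t (n+1) - tlim‖ := by
              rw [norm_smul, norm_smul, Real.norm_of_nonneg (by linarith),
                Real.norm_of_nonneg hθ0]
          _ < ε := by nlinarith [norm_nonneg (t n - tlim), norm_nonneg (t (n+1) - tlim)]
    have hval : Tendsto (Subtype.val : unitInterval → ℝ) (𝓝 0) (𝓝[Set.Ici (0:ℝ)] 0) := by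
      rw [tendsto_nhdsWithin_iff]
      exact ⟨by simpa using (continuous_subtype_val.tendsto (0 : unitInterval)),
        Eventually.of_forall fun s => s.2.1⟩
    have := key.comp hval
    have heq : (fun r : ℝ => if r ≤ 0 then tlim else interp t (1/r - 1)) ∘
        (Subtype.val : unitInterval → ℝ) = plPath t tlim := rfl
    rw [heq] at this
    unfold ContinuousAt
    rw [plPath_zero]
    exact this
  · -- s₀ > 0
    have hcont : ContinuousAt (fun r : ℝ => interp t (1/r - 1)) s₀.1 := by
      apply (continuousAt_interp t _).comp
      have : ContinuousAt (fun r : ℝ => 1/r - 1) s₀.1 := by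
        apply ContinuousAt.sub _ continuousAt_const
        exact ContinuousAt.div continuousAt_const continuousAt_id (ne_of_gt hpos)
      exact this
    have hcong : ContinuousAt (fun r : ℝ => if r ≤ 0 then tlim else interp t (1/r - 1)) s₀.1 := by
      refine hcont.congr ?_
      refine Filter.eventuallyEq_of_mem (isOpen_Ioi.mem_nhds hpos) fun r hrm => ?_
      rw [if_neg (not_le.mpr hrm)]
    exact hcong.comp continuous_subtype_val.continuousAt

/-- Uniqueness of limits along maps from euclidean space into a Δ-Hausdorff space. -/
lemma euclideanTL (hZ : DeltaHausdorff Z) (v : C(E, Z)) {l : Filter ℕ} [l.NeBot]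
    (hl : l ≤ atTop) {t_ : ℕ → E} {tlim : E} (ht : Tendsto t_ atTop (𝓝 tlim)) {ξ : Z}
    (hval : Tendsto (fun j => v (t_ j)) l (𝓝 ξ)) : ξ = v tlim := by
  set γ : C(unitInterval, E) := ⟨plPath t_ tlim, continuous_plPath ht⟩ with hγ
  set w : C(unitInterval, Z) := v.comp γ with hw
  set ρ : ℕ → unitInterval := fun j => ⟨1/(j+1), oneDivNat_mem j⟩ with hρdef
  have hρ : Tendsto ρ atTop (𝓝 0) := by
    apply tendsto_I_of_dist (g := fun n => 1/(n+1)) tendsto_one_div_add_atTop_nhds_zero_nat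
    intro n
    rw [Subtype.dist_eq, Real.dist_eq]
    have : (0:ℝ) < 1/((n:ℝ)+1) := by positivity
    rw [show ((0 : unitInterval) : ℝ) = 0 from rfl, sub_zero, abs_of_pos this]
  have hvals : (fun j => w (ρ j)) = fun j => v (t_ j) := by
    funext j
    simp only [hw, ContinuousMap.comp_apply, hγ, ContinuousMap.coe_mk, hρdef]
    rw [plPath_node]
  have := intervalTL hZ w hl hρ (hvals ▸ hval)
  rw [this, hw, ContinuousMap.comp_apply]
  simp only [hγ, ContinuousMap.coe_mk]
  rw [plPath_zero]

/-- The agreement set of two test maps into a Δ-Hausdorff space is closed. -/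
lemma agreement_closed {E₁ E₂ : Type*} [NormedAddCommGroup E₁] [NormedSpace ℝ E₁]
    [NormedAddCommGroup E₂] [NormedSpace ℝ E₂] (hZ : DeltaHausdorff Z)
    (u : C(E₁, Z)) (w : C(E₂, Z)) : IsClosed {q : E₁ × E₂ | u q.1 = w q.2} := by
  apply IsSeqClosed.isClosed
  intro q q₀ hq hq0
  have h1 : Tendsto (fun j => (q j).1) atTop (𝓝 q₀.1) :=
    (continuous_fst.tendsto q₀).comp hq0
  have h2 : Tendsto (fun j => (q j).2) atTop (𝓝 q₀.2) :=
    (continuous_snd.tendsto q₀).comp hq0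
  have hw : Tendsto (fun j => w (q j).2) atTop (𝓝 (w q₀.2)) :=
    (w.continuous.tendsto _).comp h2
  have hu : Tendsto (fun j => u (q j).1) atTop (𝓝 (w q₀.2)) := by
    rwa [tendsto_congr hq]
  exact (euclideanTL hZ u le_rfl h1 hu).symm

/-- The projection of a closed subset of `K × T` with `K` compact is closed. -/
lemma closed_snd {K T : Type*} [TopologicalSpace K] [TopologicalSpace T] [CompactSpace K]
    {W : Set (K × T)} (hW : IsClosed W) : IsClosed (Prod.snd '' W) :=
  isClosedMap_snd_of_compactSpace W hW

/-- Closedness in a Δ-generated space can be tested on maps from euclidean spaces. -/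
lemma isClosed_of_test [DeltaGeneratedSpace Z] {C : Set Z}
    (H : ∀ (n : ℕ) (w : C(Fin n → ℝ, Z)), IsClosed (w ⁻¹' C)) : IsClosed C := by
  rw [← isOpen_compl_iff, IsGeneratedBy.isOpen_iff (fun n ↦ Fin n → ℝ)]
  intro n p
  rw [Set.preimage_compl]
  exact (H n p).isOpen_compl

end PL


section Pushout

variable {A B X : Type} [TopologicalSpace A] [TopologicalSpace B] [TopologicalSpace X]

variable (f : C(A, B)) (h : C(A, X))

/-- The relation generating the pushout of `f` and `h`. -/
def pushRel : (B ⊕ X) → (B ⊕ X) → Prop :=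
  fun u v => ∃ a : A, u = Sum.inl (f a) ∧ v = Sum.inr (h a)

/-- The pushout of `f` and `h`, as a quotient of the disjoint union. -/
abbrev Glue := Quot (pushRel f h)

/-- Left inclusion. -/
def ι1 : B → Glue f h := fun b => Quot.mk _ (Sum.inl b)

/-- Right inclusion. -/
def ι2 : X → Glue f h := fun x => Quot.mk _ (Sum.inr x)

lemma continuous_ι1 : Continuous (ι1 f h) := continuous_quot_mk.comp continuous_inl

lemma continuous_ι2 : Continuous (ι2 f h) := continuous_quot_mk.comp continuous_inr

lemma glue_sound (a : A) : ι1 f h (f a) = ι2 f h (h a) := Quot.sound ⟨a, rfl, rfl⟩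

variable {f h}

lemma eqvGen_iff (hfinj : Function.Injective f) {u v : B ⊕ X} :
    Relation.EqvGen (pushRel f h) u v ↔ u = v ∨ pushRel f h u v ∨ pushRel f h v u ∨
      (∃ a a' : A, h a = h a' ∧ u = Sum.inl (f a) ∧ v = Sum.inl (f a')) := by
  constructor
  · intro H
    induction H with
    | rel u v huv => exact Or.inr (Or.inl huv)
    | refl u => exact Or.inl rfl
    | symm u v _ ih =>
      rcases ih with rfl | hR | hR | ⟨a, a', he, h1, h2⟩
      · exact Or.inl rfl
      · exact Or.inr (Or.inr (Or.inl hR))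
      · exact Or.inr (Or.inl hR)
      · exact Or.inr (Or.inr (Or.inr ⟨a', a, he.symm, h2, h1⟩))
    | trans u v w _ _ ih1 ih2 =>
      rcases ih1 with rfl | hR | hR | hE
      · exact ih2
      · -- u = inl (f a), v = inr (h a)
        obtain ⟨a, rfl, rfl⟩ := hR
        rcases ih2 with rfl | hR' | hR' | hE'
        · exact Or.inr (Or.inl ⟨a, rfl, rfl⟩)
        · obtain ⟨a', ha1, _⟩ := hR'
          exact absurd ha1 (by simp)
        · -- pushRel w (inr (h a)) : w = inl (f a'), h a' = h a
          obtain ⟨a', rfl, ha2⟩ := hR'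
          have : h a = h a' := by
            have := Sum.inr.inj ha2; exact this
          exact Or.inr (Or.inr (Or.inr ⟨a, a', this, rfl, rfl⟩))
        · obtain ⟨a', a'', _, ha1, _⟩ := hE'
          exact absurd ha1 (by simp)
      · -- pushRel v u : v = inl (f a), u = inr (h a)
        obtain ⟨a, rfl, rfl⟩ := hR
        rcases ih2 with rfl | hR' | hR' | hE'
        · exact Or.inr (Or.inr (Or.inl ⟨a, rfl, rfl⟩))
        · -- pushRel (inl (f a)) w : w = inr (h a'), f a' = f a
          obtain ⟨a', ha1, rfl⟩ := hR'
          have haa : a = a' := hfinj (Sum.inl.inj ha1)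
          subst haa
          exact Or.inl rfl
        · obtain ⟨a', _, ha2⟩ := hR'
          exact absurd ha2 (by simp)
        · -- inl (f a) = inl (f a₁), w = inl (f a₂), h a₁ = h a₂
          obtain ⟨a₁, a₂, he, ha1, rfl⟩ := hE'
          have haa : a = a₁ := hfinj (Sum.inl.inj ha1)
          subst haa
          exact Or.inr (Or.inr (Or.inl ⟨a₂, rfl, by rw [he]⟩))
      · -- u = inl (f a), v = inl (f a'), h a = h a'
        obtain ⟨a, a', he, rfl, rfl⟩ := hE
        rcases ih2 with rfl | hR' | hR' | hE'
        · exact Or.inr (Or.inr (Or.inr ⟨a, a', he, rfl, rfl⟩))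
        · -- pushRel (inl (f a')) w : w = inr (h a''), f a'' = f a'
          obtain ⟨a'', ha1, rfl⟩ := hR'
          have haa : a' = a'' := hfinj (Sum.inl.inj ha1)
          subst haa
          exact Or.inr (Or.inl ⟨a, rfl, by rw [he]⟩)
        · obtain ⟨a'', _, ha2⟩ := hR'
          exact absurd ha2 (by simp)
        · obtain ⟨a₁, a₂, he', ha1, rfl⟩ := hE'
          have haa : a' = a₁ := hfinj (Sum.inl.inj ha1)
          subst haa
          exact Or.inr (Or.inr (Or.inr ⟨a, a₂, he.trans he', rfl, rfl⟩))
  · intro H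
    rcases H with rfl | hR | hR | ⟨a, a', he, rfl, rfl⟩
    · exact Relation.EqvGen.refl _
    · exact Relation.EqvGen.rel _ _ hR
    · exact Relation.EqvGen.symm _ _ (Relation.EqvGen.rel _ _ hR)
    · refine Relation.EqvGen.trans _ _ _ (Relation.EqvGen.rel _ _ ⟨a, rfl, rfl⟩) ?_
      rw [he]
      exact Relation.EqvGen.symm _ _ (Relation.EqvGen.rel _ _ ⟨a', rfl, rfl⟩)

lemma ι1_eq_ι2_iff (hfinj : Function.Injective f) {b : B} {x : X} :
    ι1 f h b = ι2 f h x ↔ ∃ a, f a = b ∧ h a = x := by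
  rw [ι1, ι2, Quot.eq, eqvGen_iff hfinj]
  constructor
  · rintro (hc | ⟨a, ha1, ha2⟩ | ⟨a, ha1, _⟩ | ⟨a, a', _, _, ha2⟩)
    · exact absurd hc (by simp)
    · exact ⟨a, (Sum.inl.inj ha1).symm, (Sum.inr.inj ha2).symm⟩
    · exact absurd ha1 (by simp)
    · exact absurd ha2 (by simp)
  · rintro ⟨a, rfl, rfl⟩
    exact Or.inr (Or.inl ⟨a, rfl, rfl⟩)

lemma ι2_inj (hfinj : Function.Injective f) : Function.Injective (ι2 f h) := by
  intro x x' hxx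
  simp only [ι2] at hxx
  rw [Quot.eq, eqvGen_iff hfinj] at hxx
  rcases hxx with hc | ⟨a, ha1, _⟩ | ⟨a, ha1, _⟩ | ⟨a, a', _, ha1, _⟩
  · exact Sum.inr.inj hc
  · exact absurd ha1 (by simp)
  · exact absurd ha1 (by simp)
  · exact absurd ha1 (by simp)

lemma ι1_eq_ι1_iff (hfinj : Function.Injective f) {b b' : B} :
    ι1 f h b = ι1 f h b' ↔ b = b' ∨ ∃ a a', h a = h a' ∧ f a = b ∧ f a' = b' := by
  simp only [ι1]
  rw [Quot.eq, eqvGen_iff hfinj]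
  constructor
  · rintro (hc | ⟨a, _, ha2⟩ | ⟨a, _, ha2⟩ | ⟨a, a', he, ha1, ha2⟩)
    · exact Or.inl (Sum.inl.inj hc)
    · exact absurd ha2 (by simp)
    · exact absurd ha2 (by simp)
    · exact Or.inr ⟨a, a', he, (Sum.inl.inj ha1).symm, (Sum.inl.inj ha2).symm⟩
  · rintro (rfl | ⟨a, a', he, rfl, rfl⟩)
    · exact Or.inl rfl
    · exact Or.inr (Or.inr (Or.inr ⟨a, a', he, rfl, rfl⟩))

lemma isClosed_glue_iff {S : Set (Glue f h)} :
    IsClosed S ↔ IsClosed (ι1 f h ⁻¹' S) ∧ IsClosed (ι2 f h ⁻¹' S) := by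
  rw [← isQuotientMap_quot_mk.isClosed_preimage, isClosed_sum_iff]
  rfl

lemma isOpen_glue_iff {S : Set (Glue f h)} :
    IsOpen S ↔ IsOpen (ι1 f h ⁻¹' S) ∧ IsOpen (ι2 f h ⁻¹' S) := by
  rw [← isQuotientMap_quot_mk.isOpen_preimage, isOpen_sum_iff]
  rfl

lemma glue_cases (y : Glue f h) : (∃ b, y = ι1 f h b) ∨ (∃ x, y = ι2 f h x) := by
  obtain ⟨u, rfl⟩ := Quot.exists_rep y
  rcases u with b | x
  · exact Or.inl ⟨b, rfl⟩
  · exact Or.inr ⟨x, rfl⟩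

end Pushout


section Main

variable {A B X : Type} [TopologicalSpace A] [TopologicalSpace B] [TopologicalSpace X]
variable {f : C(A, B)} {h : C(A, X)}

lemma isClosedEmbedding_ι2 (hf : Topology.IsClosedEmbedding f) :
    Topology.IsClosedEmbedding (ι2 f h) := by
  apply Topology.IsClosedEmbedding.of_continuous_injective_isClosedMap (continuous_ι2 f h)
    (ι2_inj hf.injective)
  intro C hC
  rw [isClosed_glue_iff]
  constructor
  · have heq : ι1 f h ⁻¹' (ι2 f h '' C) = f '' (h ⁻¹' C) := by
      ext b
      simp only [Set.mem_preimage, Set.mem_image]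
      constructor
      · rintro ⟨x, hxC, hx⟩
        obtain ⟨a, ha1, ha2⟩ := (ι1_eq_ι2_iff hf.injective).mp hx.symm
        exact ⟨a, by rw [ha2]; exact hxC, ha1⟩
      · rintro ⟨a, haC, rfl⟩
        exact ⟨h a, haC, (glue_sound f h a).symm⟩
    rw [heq]
    exact hf.isClosedMap _ (hC.preimage h.continuous)
  · rw [Set.preimage_image_eq _ (ι2_inj hf.injective)]
    exact hC

lemma closed_singleton_ι2 (hf : Topology.IsClosedEmbedding f) (hX : DeltaHausdorff X) (ξ : X) :
    IsClosed ({ι2 f h ξ} : Set (Glue f h)) := by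
  have := (isClosedEmbedding_ι2 (h := h) hf).isClosedMap _ (DH.singleton hX ξ)
  rwa [Set.image_singleton] at this

lemma preimage_ι1_image (hfinj : Function.Injective f) (T : Set B) :
    ι1 f h ⁻¹' (ι1 f h '' T) = T ∪ f '' (h ⁻¹' (h '' (f ⁻¹' T))) := by
  ext b'
  simp only [Set.mem_preimage, Set.mem_image, Set.mem_union]
  constructor
  · rintro ⟨b, hbT, hbb⟩
    rcases (ι1_eq_ι1_iff hfinj).mp hbb with rfl | ⟨a, a', he, ha1, ha2⟩
    · exact Or.inl hbT
    · exact Or.inr ⟨a', ⟨a, by rw [ha1]; exact hbT, he⟩, ha2⟩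
  · rintro (hbT | ⟨a', ha', rfl⟩)
    · exact ⟨b', hbT, rfl⟩
    · obtain ⟨a, haT, he⟩ := ha'
      refine ⟨f a, haT, ?_⟩
      exact (ι1_eq_ι1_iff hfinj).mpr (Or.inr ⟨a, a', he, rfl, rfl⟩)

lemma preimage_ι2_ι1_image (hfinj : Function.Injective f) (T : Set B) :
    ι2 f h ⁻¹' (ι1 f h '' T) = h '' (f ⁻¹' T) := by
  ext x
  simp only [Set.mem_preimage, Set.mem_image]
  constructor
  · rintro ⟨b, hbT, hbb⟩
    obtain ⟨a, ha1, ha2⟩ := (ι1_eq_ι2_iff hfinj).mp hbb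
    exact ⟨a, by rw [ha1]; exact hbT, ha2⟩
  · rintro ⟨a, haT, rfl⟩
    exact ⟨f a, haT, glue_sound f h a⟩

lemma isOpen_ι1_image (hfinj : Function.Injective f) {V : Set B} (hV : IsOpen V)
    (hd : ∀ a : A, f a ∉ V) : IsOpen (ι1 f h '' V) := by
  have hfV : f ⁻¹' V = ∅ := by
    ext a; simp [hd a]
  rw [isOpen_glue_iff, preimage_ι1_image hfinj, preimage_ι2_ι1_image hfinj, hfV]
  simp only [Set.image_empty, Set.preimage_empty, Set.union_empty]
  exact ⟨hV, isOpen_empty⟩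

lemma subsingleton_closed (hX : DeltaHausdorff X) {s : Set X} (hs : s.Subsingleton) :
    IsClosed s := by
  rcases hs.eq_empty_or_singleton with rfl | ⟨x, rfl⟩
  · exact isClosed_empty
  · exact DH.singleton hX x

variable [DeltaGeneratedSpace X]

lemma Wprime_closed (hf : Topology.IsClosedEmbedding f) (hX : DeltaHausdorff X)
    (p : C(unitInterval, Glue f h)) {n : ℕ} (v : C(Fin n → ℝ, X)) :
    IsClosed {q : unitInterval × (Fin n → ℝ) | p q.1 = ι2 f h (v q.2)} := by
  apply IsSeqClosed.isClosed
  intro q q₀ hq hq0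
  have hs : Tendsto (fun j => (q j).1) atTop (𝓝 q₀.1) := (continuous_fst.tendsto q₀).comp hq0
  have hτ : Tendsto (fun j => (q j).2) atTop (𝓝 q₀.2) := (continuous_snd.tendsto q₀).comp hq0
  have hz : Tendsto (fun j => p (q j).1) atTop (𝓝 (p q₀.1)) := (p.continuous.tendsto _).comp hs
  have hrange : p q₀.1 ∈ Set.range (ι2 f h) := by
    refine (isClosedEmbedding_ι2 hf).isClosed_range.mem_of_tendsto hz ?_
    exact Eventually.of_forall fun j => ⟨v (q j).2, (hq j).symm⟩
  obtain ⟨x₀, hx₀⟩ := hrange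
  have hxj : Tendsto (fun j => v (q j).2) atTop (𝓝 x₀) := by
    rw [(isClosedEmbedding_ι2 hf).isEmbedding.tendsto_nhds_iff, hx₀]
    have heq2 : (ι2 f h ∘ fun j => v (q j).2) = fun j => p (q j).1 :=
      funext fun j => (hq j).symm
    rw [heq2]
    exact hz
  have hfin := euclideanTL hX v le_rfl hτ hxj
  show p q₀.1 = ι2 f h (v q₀.2)
  rw [← hfin]
  exact hx₀.symm

lemma preimage_image_closed (hf : Topology.IsClosedEmbedding f) (hX : DeltaHausdorff X)
    (p : C(unitInterval, Glue f h)) {S : Set unitInterval} (hS : IsClosed S) :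
    IsClosed (ι2 f h ⁻¹' (p '' S)) := by
  apply isClosed_of_test
  intro n w
  have hW : IsClosed ({q : unitInterval × (Fin n → ℝ) | q.1 ∈ S} ∩
      {q : unitInterval × (Fin n → ℝ) | p q.1 = ι2 f h (w q.2)}) :=
    (hS.preimage continuous_fst).inter (Wprime_closed hf hX p w)
  have himg : w ⁻¹' (ι2 f h ⁻¹' (p '' S)) = Prod.snd ''
      ({q : unitInterval × (Fin n → ℝ) | q.1 ∈ S} ∩
       {q : unitInterval × (Fin n → ℝ) | p q.1 = ι2 f h (w q.2)}) := by
    ext τ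
    simp only [Set.mem_preimage, Set.mem_image, Set.mem_inter_iff, Set.mem_setOf_eq, Prod.exists]
    constructor
    · rintro ⟨s, hsS, hps⟩
      exact ⟨s, τ, ⟨hsS, hps⟩, rfl⟩
    · rintro ⟨s, τ', ⟨hsS, hps⟩, hsnd⟩
      subst hsnd
      exact ⟨s, hsS, hps⟩
  rw [himg]
  exact closed_snd hW

lemma TLq (hf : Topology.IsClosedEmbedding f) (hX : DeltaHausdorff X)
    (p : C(unitInterval, Glue f h)) {l : Filter ℕ} [l.NeBot]
    (hl : l ≤ atTop) {s_ : ℕ → unitInterval} {s : unitInterval}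
    (hs : Tendsto s_ atTop (𝓝 s)) {x_ : ℕ → X} {ξ : X}
    (heq : ∀ᶠ j in l, ι2 f h (x_ j) = p (s_ j)) (hx : Tendsto x_ l (𝓝 ξ)) :
    p s = ι2 f h ξ := by
  obtain ⟨a, b, hnhds, hconv⟩ := exists_shrinking s
  have hmem : ∀ n, ι2 f h ξ ∈ p '' Set.Icc (a n) (b n) := by
    intro n
    have hcl := preimage_image_closed hf hX p (icc_closed (a n) (b n))
    have : ξ ∈ ι2 f h ⁻¹' (p '' Set.Icc (a n) (b n)) := by
      refine hcl.mem_of_tendsto hx ?_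
      have h1 : ∀ᶠ j in l, s_ j ∈ Set.Icc (a n) (b n) :=
        (hs.eventually_mem (hnhds n)).filter_mono hl
      filter_upwards [h1, heq] with j hj1 hj2
      exact Set.mem_preimage.mpr ⟨s_ j, hj1, hj2.symm⟩
    exact this
  choose ρ hρmem hρeq using hmem
  have h1 : Tendsto (fun m => p (ρ m)) atTop (𝓝 (p s)) :=
    (p.continuous.tendsto s).comp (hconv ρ hρmem)
  have h2 : Tendsto (fun _ : ℕ => ι2 f h ξ) atTop (𝓝 (p s)) := by
    rwa [tendsto_congr hρeq] at h1
  have h3 : p s ∈ closure ({ι2 f h ξ} : Set (Glue f h)) :=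
    mem_closure_of_tendsto h2 (Eventually.of_forall fun _ => rfl)
  rw [(closed_singleton_ι2 hf hX ξ).closure_eq] at h3
  exact Set.mem_singleton_iff.mp h3

lemma Wsecond_closed [DeltaGeneratedSpace B] (hf : Topology.IsClosedEmbedding f)
    (hB : DeltaHausdorff B) (hX : DeltaHausdorff X)
    (p : C(unitInterval, Glue f h)) {m : ℕ} (u : C(Fin m → ℝ, B)) :
    IsClosed {q : unitInterval × (Fin m → ℝ) | p q.1 = ι1 f h (u q.2)} := by
  apply IsSeqClosed.isClosed
  intro q q₀ hq hq0
  have hs : Tendsto (fun j => (q j).1) atTop (𝓝 q₀.1) := (continuous_fst.tendsto q₀).comp hq0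
  have hτ : Tendsto (fun j => (q j).2) atTop (𝓝 q₀.2) := (continuous_snd.tendsto q₀).comp hq0
  have hz : Tendsto (fun j => p (q j).1) atTop (𝓝 (p q₀.1)) := (p.continuous.tendsto _).comp hs
  have hbcont : Tendsto (fun j => u (q j).2) atTop (𝓝 (u q₀.2)) :=
    (u.continuous.tendsto _).comp hτ
  show p q₀.1 = ι1 f h (u q₀.2)
  by_cases hfreq : ∃ᶠ j in atTop, u (q j).2 ∈ Set.range f
  · -- Case 1: frequently in the image of `f`
    have hne : (atTop ⊓ 𝓟 {j | u (q j).2 ∈ Set.range f}).NeBot := frequently_iff_neBot.mp hfreq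
    set l := atTop ⊓ 𝓟 {j | u (q j).2 ∈ Set.range f} with hldef
    have hl : l ≤ atTop := inf_le_left
    have hev : ∀ᶠ j in l, u (q j).2 ∈ Set.range f := by
      rw [hldef, eventually_inf_principal]
      exact Eventually.of_forall fun j hj => hj
    have hmemf : u q₀.2 ∈ Set.range f :=
      hf.isClosed_range.mem_of_tendsto (hbcont.mono_left hl) hev
    obtain ⟨alim, halim⟩ := hmemf
    classical
    set a_ : ℕ → A := fun j => if hj : u (q j).2 ∈ Set.range f then hj.choose else alim
      with hadef
    have hfa : ∀ᶠ j in l, f (a_ j) = u (q j).2 := by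
      filter_upwards [hev] with j hj
      simp only [hadef, dif_pos hj]
      exact hj.choose_spec
    have hatend : Tendsto a_ l (𝓝 alim) := by
      rw [hf.isEmbedding.tendsto_nhds_iff, halim]
      exact Tendsto.congr' (by filter_upwards [hfa] with j hj; exact hj.symm)
        (hbcont.mono_left hl)
    have hxval : ∀ᶠ j in l, ι2 f h (h (a_ j)) = p (q j).1 := by
      filter_upwards [hfa] with j hj
      rw [← glue_sound, hj]
      exact (hq j).symm
    have hxlim : Tendsto (fun j => h (a_ j)) l (𝓝 (h alim)) :=
      (h.continuous.tendsto _).comp hatend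
    have hfin := TLq hf hX p hl hs hxval hxlim
    rw [hfin, ← glue_sound, halim]
  · -- Case 2: eventually not in the image of `f`
    have hev' : ∀ᶠ j in atTop, u (q j).2 ∉ Set.range f := not_frequently.mp hfreq
    by_cases hcase : p q₀.1 ∈ Set.range (ι2 f h)
    · -- 2-I: limit lies in the image of `X`
      obtain ⟨x₀, hx₀⟩ := hcase
      classical
      set t' : ℕ → (Fin m → ℝ) := fun j => if u (q j).2 ∈ Set.range f then q₀.2 else (q j).2
        with ht'def
      have ht' : Tendsto t' atTop (𝓝 q₀.2) := by
        apply tendsto_iff_dist_tendsto_zero.mpr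
        apply squeeze_zero (fun j => dist_nonneg) (g := fun j => dist ((q j).2) q₀.2)
        · intro j
          simp only [ht'def]
          split
          · simp only [dist_self]
            exact dist_nonneg
          · exact le_refl _
        · exact tendsto_iff_dist_tendsto_zero.mp hτ
      set S : Set (Fin m → ℝ) := insert q₀.2 (Set.range t') with hSdef
      have hScpt : IsCompact S := ht'.isCompact_insert_range
      have hT : IsClosed (u '' S) := by
        apply isClosed_of_test
        intro k w
        have hAg : IsClosed {r : (Fin m → ℝ) × (Fin k → ℝ) | u r.1 = w r.2} :=
          agreement_closed hB u w
        have hcs : CompactSpace S := isCompact_iff_compactSpace.mp hScpt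
        have hW2 : IsClosed {r : S × (Fin k → ℝ) | u r.1.1 = w r.2} := by
          have hco : Continuous fun r : S × (Fin k → ℝ) =>
              ((r.1.1, r.2) : (Fin m → ℝ) × (Fin k → ℝ)) :=
            (continuous_subtype_val.comp continuous_fst).prodMk continuous_snd
          exact hAg.preimage hco
        have himg : w ⁻¹' (u '' S) = Prod.snd '' {r : S × (Fin k → ℝ) | u r.1.1 = w r.2} := by
          ext τ
          simp only [Set.mem_preimage, Set.mem_image, Set.mem_setOf_eq, Prod.exists]
          constructor
          · rintro ⟨σ, hσS, hσeq⟩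
            exact ⟨⟨σ, hσS⟩, τ, hσeq, rfl⟩
          · rintro ⟨σ, τ', heq', hsnd⟩
            exact ⟨σ.1, σ.2, by rw [← hsnd]; exact heq'⟩
        rw [himg]
        exact closed_snd hW2
      have hkey : ∀ a : A, f a ∈ u '' S → f a = u q₀.2 := by
        rintro a ⟨σ, hσS, hσeq⟩
        rcases Set.mem_insert_iff.mp hσS with rfl | ⟨j, rfl⟩
        · exact hσeq.symm
        · by_cases hj : u (q j).2 ∈ Set.range f
          · have heqt : t' j = q₀.2 := by simp only [ht'def]; rw [if_pos hj]
            rw [heqt] at hσeq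
            exact hσeq.symm
          · exfalso
            have heqt : t' j = (q j).2 := by simp only [ht'def]; rw [if_neg hj]
            rw [heqt] at hσeq
            exact hj (hσeq ▸ ⟨a, rfl⟩)
      have hfsub : (f ⁻¹' (u '' S)).Subsingleton := by
        intro a1 ha1 a2 ha2
        exact hf.injective ((hkey a1 ha1).trans (hkey a2 ha2).symm)
      have hQclosed : IsClosed (ι1 f h '' (u '' S)) := by
        rw [isClosed_glue_iff, preimage_ι1_image hf.injective, preimage_ι2_ι1_image hf.injective]
        constructor
        · refine hT.union (hf.isClosedMap _ ?_)
          exact (subsingleton_closed hX (hfsub.image h)).preimage h.continuous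
        · exact subsingleton_closed hX (hfsub.image h)
      have hpin : p q₀.1 ∈ ι1 f h '' (u '' S) := by
        refine hQclosed.mem_of_tendsto hz ?_
        filter_upwards [hev'] with j hj
        have hmem : (q j).2 ∈ S := by
          rw [hSdef]
          exact Set.mem_insert_iff.mpr (Or.inr ⟨j, by simp only [ht'def]; rw [if_neg hj]⟩)
        rw [hq j]
        exact ⟨u (q j).2, ⟨(q j).2, hmem, rfl⟩, rfl⟩
      obtain ⟨b, ⟨σ, hσS, rfl⟩, hb⟩ := hpin
      rcases Set.mem_insert_iff.mp hσS with rfl | ⟨j, rfl⟩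
      · exact hb.symm
      · by_cases hj : u (q j).2 ∈ Set.range f
        · have heqt : t' j = q₀.2 := by simp only [ht'def]; rw [if_pos hj]
          rw [heqt] at hb
          exact hb.symm
        · exfalso
          have ht'j : t' j = (q j).2 := by simp only [ht'def]; rw [if_neg hj]
          have hcontra : ι1 f h (u (q j).2) = ι2 f h x₀ := by
            rw [← ht'j, hb, ← hx₀]
          obtain ⟨a, ha1, _⟩ := (ι1_eq_ι2_iff hf.injective).mp hcontra
          exact hj ⟨a, ha1⟩
    · -- 2-II: limit lies in the open part coming from `B`
      have hβ : ∃ β : B, p q₀.1 = ι1 f h β ∧ β ∉ Set.range f := by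
        rcases glue_cases (p q₀.1) with ⟨b, hb⟩ | ⟨x, hx⟩
        · refine ⟨b, hb, ?_⟩
          rintro ⟨a, ha⟩
          apply hcase
          rw [hb, ← ha, glue_sound]
          exact ⟨h a, rfl⟩
        · exact absurd ⟨x, hx.symm⟩ hcase
      obtain ⟨β, hβeq, hβnot⟩ := hβ
      have hbβ : Tendsto (fun j => u (q j).2) atTop (𝓝 β) := by
        rw [tendsto_nhds]
        intro V hVopen hβV
        set V' := V ∩ (Set.range f)ᶜ with hV'def
        have hV'open : IsOpen V' := hVopen.inter hf.isClosed_range.isOpen_compl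
        have hd : ∀ a : A, f a ∉ V' := fun a ha => ha.2 ⟨a, rfl⟩
        have hopen : IsOpen (ι1 f h '' V') := isOpen_ι1_image hf.injective hV'open hd
        have hβin : p q₀.1 ∈ ι1 f h '' V' := ⟨β, ⟨hβV, hβnot⟩, hβeq.symm⟩
        have hevent : ∀ᶠ j in atTop, p (q j).1 ∈ ι1 f h '' V' :=
          hz.eventually_mem (hopen.mem_nhds hβin)
        filter_upwards [hevent] with j hj
        rw [hq j] at hj
        have hj' : u (q j).2 ∈ ι1 f h ⁻¹' (ι1 f h '' V') := hj
        rw [preimage_ι1_image hf.injective] at hj'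
        rcases hj' with hin | ⟨a', ha', _⟩
        · exact hin.1
        · exfalso
          have hempty : f ⁻¹' V' = (∅ : Set A) := by ext a; simp [hd a]
          rw [hempty] at ha'
          simp at ha'
      have hfin := euclideanTL hB u le_rfl hτ hbβ
      rw [hβeq, hfin]

theorem glue_deltaHausdorff [DeltaGeneratedSpace B] [DeltaGeneratedSpace X]
    (hf : Topology.IsClosedEmbedding f) (hB : DeltaHausdorff B) (hX : DeltaHausdorff X) :
    DeltaHausdorff (Glue f h) := by
  intro p
  rw [← Set.image_univ, isClosed_glue_iff]
  constructor
  · apply isClosed_of_test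
    intro m u
    have hW := Wsecond_closed hf hB hX p u
    have himg : u ⁻¹' (ι1 f h ⁻¹' (p '' Set.univ)) =
        Prod.snd '' {q : unitInterval × (Fin m → ℝ) | p q.1 = ι1 f h (u q.2)} := by
      ext τ
      simp only [Set.mem_preimage, Set.mem_image, Set.mem_setOf_eq, Prod.exists,
        Set.mem_univ, true_and]
      constructor
      · rintro ⟨s, hps⟩
        exact ⟨s, τ, hps, rfl⟩
      · rintro ⟨s, τ', hps, hsnd⟩
        exact ⟨s, by rw [← hsnd]; exact hps⟩
    rw [himg]
    exact closed_snd hW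
  · exact preimage_image_closed hf hX p isClosed_univ

end Main

end DHProof


end DHProofSection

/-- If `f : A → B` is a closed embedding of Δ-generated spaces, `h : A → X` is a
continuous map with `X` Δ-generated, and `B` and `X` are Δ-Hausdorff, then the pushout
`B ⊔_A X` (computed in the category of topological spaces) is Δ-Hausdorff. -/
theorem deltaHausdorff_pushout
    {A B X : TopCat.{0}}
    [DeltaGeneratedSpace A] [DeltaGeneratedSpace B] [DeltaGeneratedSpace X]
    (f : A ⟶ B) (hf : Topology.IsClosedEmbedding f) (h : A ⟶ X)
    (hB : DeltaHausdorff B) (hX : DeltaHausdorff X) :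
    DeltaHausdorff ((pushout f h : TopCat.{0}) : Type) := by
  let fc : C(A, B) := f.hom
  let hc : C(A, X) := h.hom
  let Ypt : TopCat.{0} := TopCat.of (DHProof.Glue fc hc)
  let i1 : B ⟶ Ypt := TopCat.ofHom ⟨DHProof.ι1 fc hc, DHProof.continuous_ι1 fc hc⟩
  let i2 : X ⟶ Ypt := TopCat.ofHom ⟨DHProof.ι2 fc hc, DHProof.continuous_ι2 fc hc⟩
  have hcond : f ≫ i1 = h ≫ i2 := by
    apply TopCat.ext
    intro a
    exact DHProof.glue_sound fc hc a
  let c : PushoutCocone f h := PushoutCocone.mk i1 i2 hcond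
  have hsound : ∀ (s : PushoutCocone f h) (u v : ↑B ⊕ ↑X), DHProof.pushRel fc hc u v →
      Sum.elim s.inl s.inr u = Sum.elim s.inl s.inr v := by
    rintro s _ _ ⟨a, rfl, rfl⟩
    have := ConcreteCategory.congr_hom s.condition a
    simpa using this
  let hcolim : IsColimit c := by
    apply PushoutCocone.IsColimit.mk hcond
      (fun s => TopCat.ofHom ⟨Quot.lift (Sum.elim s.inl s.inr) (hsound s),
        continuous_quot_lift _ ((ContinuousMap.continuous s.inl.hom).sumElim
          (ContinuousMap.continuous s.inr.hom))⟩)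
    · intro s
      apply TopCat.ext
      intro b
      rfl
    · intro s
      apply TopCat.ext
      intro x
      rfl
    · intro s mdesc h1 h2
      apply TopCat.ext
      intro y
      obtain ⟨u, rfl⟩ := Quot.exists_rep y
      rcases u with b | x
      · exact ConcreteCategory.congr_hom h1 b
      · exact ConcreteCategory.congr_hom h2 x
  let e : (pushout f h : TopCat.{0}) ≅ Ypt := colimit.isoColimitCocone ⟨c, hcolim⟩
  let φ : ((pushout f h : TopCat.{0}) : Type) ≃ₜ DHProof.Glue fc hc := TopCat.homeoOfIso e
  have hglue : DeltaHausdorff (DHProof.Glue fc hc) := DHProof.glue_deltaHausdorff hf hB hX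
  intro g
  have hcl : IsClosed (Set.range fun t => φ (g t)) :=
    hglue ⟨fun t => φ (g t), φ.continuous.comp g.continuous⟩
  have himg : Set.range g = φ ⁻¹' (Set.range fun t => φ (g t)) := by
    ext y
    simp only [Set.mem_preimage, Set.mem_range]
    exact ⟨fun ⟨t, ht⟩ => ⟨t, by rw [ht]⟩, fun ⟨t, ht⟩ => ⟨t, φ.injective ht⟩⟩
  rw [himg]
  exact hcl.preimage φ.continuous
end

section
/- Let ι be a nonempty directed preorder and let X : ι → Top be a functor (a directed system of topological spaces) such that every transition map X_i → X_j (for i ≤ j) is injective and such that every X_i is Δ-generated and Δ-Hausdorff. Then the colimit of X in the category of topological spaces (equipped with the final topology) is Δ-Hausdorff. -/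
open CategoryTheory CategoryTheory.Limits Filter Metric Set

section Poly

variable {E : Type*} [NormedAddCommGroup E] [NormedSpace ℝ E]


/-- piecewise linear path through a sequence -/
noncomputable def polyG (y : ℕ → E) (t : ℝ) : E :=
  y ⌊t⌋₊ + (t - ⌊t⌋₊) • (y (⌊t⌋₊ + 1) - y ⌊t⌋₊)

lemma polyG_nat (y : ℕ → E) (k : ℕ) : polyG y (k : ℝ) = y k := by
  simp [polyG]

lemma continuous_polyG (y : ℕ → E) : Continuous (polyG y) := by
  set s : ℕ → Set ℝ := fun k => if k = 0 then Iic (1:ℝ) else Icc (k:ℝ) (k+1) with hs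
  have hcov : (⋃ k : ℕ, s k) = univ := by
    ext t; simp only [mem_iUnion, mem_univ, iff_true]
    rcases le_or_gt t 1 with h | h
    · exact ⟨0, by simp [hs, h]⟩
    · have h0 : (0:ℝ) ≤ t := by linarith
      have h1 : ⌊t⌋₊ ≠ 0 := by
        have : (1:ℕ) ≤ ⌊t⌋₊ := (Nat.one_le_floor_iff t).mpr h.le
        omega
      exact ⟨⌊t⌋₊, by simp only [hs, h1, if_false]; exact ⟨Nat.floor_le h0, (Nat.lt_floor_add_one t).le⟩⟩
  have hcl : ∀ k, IsClosed (s k) := by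
    intro k; by_cases h : k = 0 <;> simp [hs, h, isClosed_Iic, isClosed_Icc]
  have hlf : LocallyFinite s := by
    intro t
    refine ⟨Ioo (t-1) (t+1), Ioo_mem_nhds (by linarith) (by linarith), ?_⟩
    apply Set.Finite.subset (Set.finite_Iic (⌈t⌉₊ + 1))
    rintro k ⟨u, hu1, hu2⟩
    simp only [mem_Iic]
    by_cases h : k = 0
    · omega
    · simp only [hs, h, if_false] at hu1
      have h1 : (k:ℝ) ≤ u := hu1.1
      have h2 : u < t + 1 := hu2.2
      have h3 : (k:ℝ) < t + 1 := lt_of_le_of_lt h1 h2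
      have : (k:ℝ) ≤ ⌈t⌉₊ + 1 := by
        have := Nat.le_ceil t; linarith
      exact_mod_cast this
  apply hlf.continuous hcov hcl
  intro k
  by_cases h : k = 0
  · subst h
    simp only [hs, if_true]
    apply (ContinuousOn.congr (f := fun t : ℝ => y 0 + t • (y 1 - y 0)))
    · exact ((continuous_const.add (continuous_id.smul continuous_const))).continuousOn
    · intro t ht
      simp only [mem_Iic] at ht
      rcases lt_or_eq_of_le ht with h1 | h1
      · have : ⌊t⌋₊ = 0 := Nat.floor_eq_zero.mpr h1
        simp [polyG, this]
      · subst h1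
        have : ⌊(1:ℝ)⌋₊ = 1 := by norm_num
        simp [polyG, this]
  · simp only [hs, h, if_false]
    apply (ContinuousOn.congr (f := fun t : ℝ => y k + (t - k) • (y (k+1) - y k)))
    · exact ((continuous_const.add ((continuous_id.sub continuous_const).smul continuous_const))).continuousOn
    · intro t ht
      simp only [mem_Icc] at ht
      rcases lt_or_eq_of_le ht.2 with h1 | h1
      · have hfl : ⌊t⌋₊ = k := by
          rw [Nat.floor_eq_iff (le_trans (by positivity) ht.1)]
          exact ⟨ht.1, by exact_mod_cast h1⟩
        simp [polyG, hfl]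
      · subst h1
        have hfl : ⌊((k:ℝ)+1)⌋₊ = k + 1 := by
          rw [show ((k:ℝ)+1) = ((k+1 : ℕ):ℝ) by push_cast; ring, Nat.floor_natCast]
        simp only [polyG, hfl]
        push_cast
        rw [show ((k:ℝ) + 1 - (k+1)) = 0 by ring, show ((k:ℝ) + 1 - k) = 1 by ring]
        simp

lemma polyG_dist_le (y : ℕ → E) {l : E} {r : ℝ} {t : ℝ} (ht : 0 ≤ t)
    (h1 : dist (y ⌊t⌋₊) l ≤ r) (h2 : dist (y (⌊t⌋₊ + 1)) l ≤ r) :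
    dist (polyG y t) l ≤ r := by
  set k := ⌊t⌋₊ with hk
  have hτ0 : 0 ≤ t - k := sub_nonneg.mpr (Nat.floor_le ht)
  have hτ1 : t - k ≤ 1 := by
    have := Nat.lt_floor_add_one t
    rw [← hk] at this
    linarith
  have heq : polyG y t = (1 - (t - k)) • y k + (t - k) • y (k+1) := by
    simp only [polyG, ← hk, smul_sub, sub_smul, one_smul]
    abel
  rw [heq, ← Metric.mem_closedBall]
  exact (convex_closedBall l r) (Metric.mem_closedBall.mpr h1) (Metric.mem_closedBall.mpr h2)
    (by linarith) hτ0 (by ring)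

lemma tendsto_polyG (y : ℕ → E) {l : E} (hy : Tendsto y atTop (nhds l)) :
    Tendsto (polyG y) atTop (nhds l) := by
  rw [Metric.tendsto_atTop]
  intro δ hδ
  rw [Metric.tendsto_atTop] at hy
  obtain ⟨K, hK⟩ := hy (δ/2) (by linarith)
  refine ⟨(K : ℝ), fun t ht => ?_⟩
  have ht0 : 0 ≤ t := le_trans (by positivity) ht
  have hKf : K ≤ ⌊t⌋₊ := Nat.le_floor ht
  have h1 : dist (y ⌊t⌋₊) l ≤ δ/2 := (hK _ hKf).le
  have h2 : dist (y (⌊t⌋₊ + 1)) l ≤ δ/2 := (hK _ (by omega)).le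
  have := polyG_dist_le y ht0 h1 h2
  linarith

open unitInterval in
lemma exists_path_tail (x : ℕ → E) (l : E) (hx : Tendsto x atTop (nhds l))
    {ε : ℝ} (hε : 0 < ε) :
    ∃ (q : C(unitInterval, E)) (N : ℕ), (∀ m, N ≤ m → x m ∈ Set.range q) ∧
      ∀ z ∈ Set.range q, dist z l ≤ ε := by
  rw [Metric.tendsto_atTop] at hx
  obtain ⟨N, hN⟩ := hx ε hε
  set y : ℕ → E := fun k => x (k + N) with hy
  have hyt : Tendsto y atTop (nhds l) := by
    rw [Metric.tendsto_atTop]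
    intro δ hδ
    obtain ⟨K, hK⟩ := hx δ hδ
    exact ⟨K, fun k hk => hK (k + N) (le_trans hk (Nat.le_add_right _ _))⟩
  have hyd : ∀ k, dist (y k) l ≤ ε := fun k => (hN (k + N) (Nat.le_add_left _ _)).le
  set qf : unitInterval → E := fun s =>
    if h : (s : ℝ) < 1 then polyG y ((s : ℝ)/(1 - (s:ℝ))) else l with hqf
  have hcont : Continuous qf := by
    rw [continuous_iff_continuousAt]
    intro s₀
    by_cases h : (s₀ : ℝ) < 1
    · have hU : {s : unitInterval | (s : ℝ) < 1} ∈ nhds s₀ :=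
        (isOpen_lt continuous_subtype_val continuous_const).mem_nhds h
      have hg : ContinuousAt (fun s : unitInterval => polyG y ((s:ℝ)/(1 - (s:ℝ)))) s₀ := by
        apply (continuous_polyG y).continuousAt.comp
        exact ContinuousAt.div continuous_subtype_val.continuousAt
          (continuousAt_const.sub continuous_subtype_val.continuousAt)
          (sub_ne_zero.mpr (ne_of_lt h).symm)
      apply hg.congr
      filter_upwards [hU] with s hs
      simp only [hqf, dif_pos hs]
    · have hs1 : (s₀ : ℝ) = 1 := le_antisymm s₀.2.2 (not_lt.mp h)
      have hq0 : qf s₀ = l := dif_neg h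
      unfold ContinuousAt
      rw [hq0, Metric.tendsto_nhds]
      intro δ hδ
      obtain ⟨T, hT⟩ := Metric.tendsto_atTop.mp (tendsto_polyG y hyt) δ hδ
      obtain ⟨M, hM⟩ := exists_nat_ge T
      have hV : {s : unitInterval | 1 - 1/((M:ℝ)+1) < (s : ℝ)} ∈ nhds s₀ := by
        apply (isOpen_lt continuous_const continuous_subtype_val).mem_nhds
        simp only [Set.mem_setOf_eq, hs1]
        have : (0:ℝ) < 1/((M:ℝ)+1) := by positivity
        linarith
      filter_upwards [hV] with s hs
      by_cases h2 : (s : ℝ) < 1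
      · simp only [hqf, dif_pos h2]
        apply hT
        have h1s : (0:ℝ) < 1 - s := by linarith
        refine le_trans hM ?_
        rw [le_div_iff₀ h1s]
        have hMp : (0:ℝ) < (M:ℝ)+1 := by positivity
        have h3 : (1:ℝ) - s < 1/((M:ℝ)+1) := by linarith
        have hkey : ((M:ℝ)+1)*(1-(s:ℝ)) < 1 := by
          calc ((M:ℝ)+1)*(1-(s:ℝ)) < ((M:ℝ)+1)*(1/((M:ℝ)+1)) := by
                exact mul_lt_mul_of_pos_left h3 hMp
          _ = 1 := by field_simp
        nlinarith
      · simp only [hqf, dif_neg h2]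
        simpa using hδ
  refine ⟨⟨qf, hcont⟩, N, ?_, ?_⟩
  · intro m hm
    have hx' : x m = y (m - N) := by
      simp only [hy]; congr 1; omega
    rw [hx']
    set k := m - N with hk
    have hk1 : (0:ℝ) < (k:ℝ) + 1 := by positivity
    refine ⟨⟨(k:ℝ)/((k:ℝ)+1), ⟨by positivity, by rw [div_le_one hk1]; linarith⟩⟩, ?_⟩
    have hlt : ((k:ℝ)/((k:ℝ)+1)) < 1 := by rw [div_lt_one hk1]; linarith
    simp only [ContinuousMap.coe_mk, hqf, dif_pos hlt]
    have harg : ((k:ℝ)/((k:ℝ)+1))/(1 - (k:ℝ)/((k:ℝ)+1)) = (k:ℝ) := by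
      field_simp
      ring
    rw [harg, polyG_nat]
  · rintro z ⟨s, rfl⟩
    simp only [ContinuousMap.coe_mk, hqf]
    by_cases h2 : (s : ℝ) < 1
    · rw [dif_pos h2]
      have ht0 : (0:ℝ) ≤ (s:ℝ)/(1 - (s:ℝ)) := div_nonneg s.2.1 (by linarith)
      exact polyG_dist_le y ht0 (hyd _) (hyd _)
    · rw [dif_neg h2]; simpa using hε.le

end Poly

/-- Closedness in a delta-generated space can be tested along maps from ℝⁿ. -/
lemma deltaGenerated_isClosed_of {Z : Type*} [TopologicalSpace Z] [DeltaGeneratedSpace Z]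
    {u : Set Z} (h : ∀ (n : ℕ) (p : C(Fin n → ℝ, Z)), IsClosed (⇑p ⁻¹' u)) : IsClosed u := by
  rw [← isOpen_compl_iff, DeltaGeneratedSpace.isOpen_iff (X := fun n : ℕ => Fin n → ℝ)]
  intro n p
  rw [Set.preimage_compl, isOpen_compl_iff]
  exact h n p

/-- The colimit (in the category of topological spaces) of a directed system of
Δ-generated Δ-Hausdorff spaces with injective transition maps is Δ-Hausdorff. -/
theorem deltaHausdorff_directed_colimit
    {ι : Type} [Preorder ι] [Nonempty ι] [IsDirected ι (· ≤ ·)]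
    (F : ι ⥤ TopCat.{0})
    (hinj : ∀ (i j : ι) (hij : i ≤ j), Function.Injective (F.map (homOfLE hij)))
    (hdg : ∀ i : ι, DeltaGeneratedSpace (F.obj i))
    (hH : ∀ i : ι, DeltaHausdorff (F.obj i))
    (c : Cocone F) (hc : IsColimit c) :
    DeltaHausdorff c.pt := by
  classical
  -- description of equality of points in the colimit
  have key_eq : ∀ (i j : ι) (x : F.obj i) (z : F.obj j),
      c.ι.app i x = c.ι.app j z ↔ ∃ (k : ι) (hik : i ≤ k) (hjk : j ≤ k),
        F.map (homOfLE hik) x = F.map (homOfLE hjk) z := by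
    intro i j x z
    constructor
    · intro h
      have h2 := (Types.FilteredColimit.isColimit_eq_iff (F ⋙ forget TopCat)
        (isColimitOfPreserves (forget TopCat) hc) (i := i) (j := j) (xi := x) (xj := z)).mp h
      obtain ⟨k, fk, gk, hk⟩ := h2
      refine ⟨k, leOfHom fk, leOfHom gk, ?_⟩
      have e1 : fk = homOfLE (leOfHom fk) := Subsingleton.elim _ _
      have e2 : gk = homOfLE (leOfHom gk) := Subsingleton.elim _ _
      rw [← e1, ← e2]; exact hk
    · rintro ⟨k, hik, hjk, h⟩
      have e1 : c.ι.app i x = c.ι.app k (F.map (homOfLE hik) x) := by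
        rw [← c.w (homOfLE hik)]; rfl
      have e2 : c.ι.app j z = c.ι.app k (F.map (homOfLE hjk) z) := by
        rw [← c.w (homOfLE hjk)]; rfl
      rw [e1, e2, h]
  -- the structure maps into the colimit are injective
  have ι_inj : ∀ i : ι, Function.Injective (c.ι.app i) := by
    intro i x y h
    rw [key_eq i i x y] at h
    obtain ⟨k, h1, h2, h⟩ := h
    have e : homOfLE h1 = homOfLE h2 := rfl
    rw [← e] at h
    exact hinj i k h1 h
  -- closedness in the colimit can be tested on each piece
  have key_closed : ∀ S : Set c.pt, (∀ i, IsClosed ((c.ι.app i) ⁻¹' S)) → IsClosed S := by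
    intro S hS
    have ht := TopCat.coinduced_of_isColimit c hc
    have hT : @IsOpen _ (⨆ j, TopologicalSpace.coinduced (c.ι.app j) (F.obj j).str) Sᶜ := by
      rw [isOpen_iSup_iff]
      intro i
      rw [isOpen_coinduced]
      show IsOpen (⇑(c.ι.app i) ⁻¹' Sᶜ)
      rw [Set.preimage_compl, isOpen_compl_iff]
      exact hS i
    rw [← isOpen_compl_iff]
    rw [← ht] at hT
    exact hT
  -- Key Lemma A: images in the colimit of ranges of paths in the pieces are closed
  have lemA : ∀ (k : ι) (δ : C(unitInterval, F.obj k)),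
      IsClosed ((c.ι.app k) '' Set.range δ) := by
    intro k δ
    apply key_closed
    intro l
    haveI := hdg l
    apply deltaGenerated_isClosed_of
    intro n p
    obtain ⟨m, hlm, hkm⟩ := directed_of (· ≤ ·) l k
    have hset : (⇑p ⁻¹' (⇑(c.ι.app l) ⁻¹' (⇑(c.ι.app k) '' Set.range ⇑δ)))
        = (fun t => F.map (homOfLE hlm) (p t)) ⁻¹'
          (Set.range fun s => F.map (homOfLE hkm) (δ s)) := by
      ext t
      simp only [Set.mem_preimage, Set.mem_image, Set.mem_range]
      constructor
      · rintro ⟨z, ⟨s, rfl⟩, hz⟩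
        refine ⟨s, ?_⟩
        rw [key_eq] at hz
        obtain ⟨m', h1, h2, he⟩ := hz
        obtain ⟨m'', hm1, hm2⟩ := directed_of (· ≤ ·) m m'
        apply hinj m m'' hm1
        have c1 : F.map (homOfLE hm1) (F.map (homOfLE hkm) (δ s))
            = F.map (homOfLE (hkm.trans hm1)) (δ s) := by
          rw [← homOfLE_comp hkm hm1, F.map_comp]; rfl
        have c2 : F.map (homOfLE hm1) (F.map (homOfLE hlm) (p t))
            = F.map (homOfLE (hlm.trans hm1)) (p t) := by
          rw [← homOfLE_comp hlm hm1, F.map_comp]; rfl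
        have c3 : F.map (homOfLE hm2) (F.map (homOfLE h1) (δ s))
            = F.map (homOfLE (h1.trans hm2)) (δ s) := by
          rw [← homOfLE_comp h1 hm2, F.map_comp]; rfl
        have c4 : F.map (homOfLE hm2) (F.map (homOfLE h2) (p t))
            = F.map (homOfLE (h2.trans hm2)) (p t) := by
          rw [← homOfLE_comp h2 hm2, F.map_comp]; rfl
        have e5 : homOfLE (hkm.trans hm1) = homOfLE (h1.trans hm2) := rfl
        have e6 : homOfLE (hlm.trans hm1) = homOfLE (h2.trans hm2) := rfl
        rw [c1, c2, e5, e6, ← c3, ← c4, he]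
      · rintro ⟨s, hs⟩
        refine ⟨δ s, ⟨s, rfl⟩, ?_⟩
        rw [key_eq]
        exact ⟨m, hkm, hlm, hs⟩
    rw [hset]
    have hcl : IsClosed (Set.range fun s => F.map (homOfLE hkm) (δ s)) := by
      have := hH m ⟨fun s => F.map (homOfLE hkm) (δ s),
        (F.map (homOfLE hkm)).hom.continuous.comp δ.continuous⟩
      simpa using this
    exact hcl.preimage ((F.map (homOfLE hlm)).hom.continuous.comp p.continuous)
  -- now the main proof
  intro f
  apply key_closed
  intro i
  haveI := hdg i
  haveI : T1Space (F.obj i) := by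
    constructor
    intro b
    have := hH i (ContinuousMap.const _ b)
    have he : Set.range (Function.const unitInterval b) = {b} := Set.range_const
    simpa [he] using this
  apply deltaGenerated_isClosed_of
  intro n p
  set E : Set ((Fin n → ℝ) × unitInterval) := {z | c.ι.app i (p z.1) = f z.2} with hE
  have hEclosed : IsClosed E := by
    apply IsSeqClosed.isClosed
    intro z zl hz hlim
    have hx : Tendsto (fun m => (z m).1) atTop (nhds zl.1) :=
      (continuous_fst.tendsto zl).comp hlim
    have hs : Tendsto (fun m => (z m).2) atTop (nhds zl.2) :=
      (continuous_snd.tendsto zl).comp hlim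
    have hb : ∀ j : ℕ, ∃ y : Fin n → ℝ, dist y zl.1 ≤ 1/((j:ℝ)+1)
        ∧ c.ι.app i (p y) = f zl.2 := by
      intro j
      obtain ⟨q, N, hq1, hq2⟩ := exists_path_tail (fun m => (z m).1) zl.1 hx
        (show (0:ℝ) < 1/((j:ℝ)+1) by positivity)
      have hclosed := lemA i (p.comp q)
      have hmem : f zl.2 ∈ (⇑(c.ι.app i) '' Set.range ⇑(p.comp q)) := by
        apply hclosed.mem_of_tendsto ((f.continuous.tendsto zl.2).comp hs)
        filter_upwards [Filter.eventually_ge_atTop N] with m hm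
        obtain ⟨t, ht⟩ := hq1 m hm
        refine ⟨p (q t), ⟨t, rfl⟩, ?_⟩
        rw [ht]
        exact hz m
      obtain ⟨w, ⟨t, rfl⟩, hw⟩ := hmem
      exact ⟨q t, hq2 _ ⟨t, rfl⟩, hw⟩
    choose y hy1 hy2 using hb
    have hyt : Tendsto y atTop (nhds zl.1) := by
      rw [tendsto_iff_dist_tendsto_zero]
      exact squeeze_zero (fun j => dist_nonneg) hy1 tendsto_one_div_add_atTop_nhds_zero_nat
    have hpy : ∀ j, p (y j) = p (y 0) := by
      intro j
      apply ι_inj i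
      rw [hy2 j, hy2 0]
    have hto : Tendsto (fun j => p (y j)) atTop (nhds (p zl.1)) :=
      (p.continuous.tendsto zl.1).comp hyt
    rw [show (fun j => p (y j)) = fun _ => p (y 0) from funext hpy] at hto
    have hfin : p (y 0) = p zl.1 := tendsto_const_nhds_iff.mp hto
    show c.ι.app i (p zl.1) = f zl.2
    rw [← hfin, hy2 0]
  have hproj : (⇑p ⁻¹' (⇑(c.ι.app i) ⁻¹' Set.range ⇑f)) = Prod.fst '' E := by
    ext x
    constructor
    · intro hx
      obtain ⟨s, hs⟩ := hx
      exact ⟨(x, s), hs.symm, rfl⟩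
    · rintro ⟨z, hz, rfl⟩
      exact ⟨z.2, hz.symm⟩
  show IsClosed (⇑p ⁻¹' (⇑(c.ι.app i) ⁻¹' Set.range ⇑f))
  rw [hproj]
  exact isClosedMap_fst_of_compactSpace E hEclosed
end
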